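/- arXiv:1909.01221 — 5 statements merged into one kernel-verified Lean document; each statement's English description precedes it below -/
import Mathlib

section
/- Let α ∈ (0,1) and set r = h⁻¹(α). Then, as ρ → 1⁻, min over d ∈ [0, 2r] of ( 2 − log(1+ρ) − w_d(α,α) − d·log((1−ρ)/(1+ρ)) ) = (1−α) + ((1/2 − √(r(1−r)))/ln 2)·(1−ρ) + o(1−ρ). -/
open Finset Asymptotics Filter

/-- Binary entropy function (base-2 logarithms). -/
noncomputable def binEnt (p : ℝ) : ℝ :=
  -(p * Real.logb 2 p) - (1 - p) * Real.logb 2 (1 - p)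

/-- Inverse of the binary entropy function restricted to `[0, 1/2]`. -/
noncomputable def binEntInv (x : ℝ) : ℝ :=
  sSup {p : ℝ | p ∈ Set.Icc (0:ℝ) (1/2) ∧ binEnt p ≤ x}

/-- `p*q = p(1-q) + q(1-p)`. -/
def pstar (p q : ℝ) : ℝ := p * (1 - q) + q * (1 - p)

/-- Probability of the rectangle `A × B` for `ρ`-correlated uniform binary strings. -/
noncomputable def Pxy (n : ℕ) (ρ : ℝ) (A B : Finset (Fin n → Bool)) : ℝ :=
  ∑ a ∈ A, ∑ b ∈ B,
    (2:ℝ)⁻¹ ^ n * ((1 + ρ)/2) ^ n * ((1 - ρ)/(1 + ρ)) ^ (hammingDist a b)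

/-- Hamming sphere of radius `j` around the all-zeros string in `{0,1}^n`. -/
def hSphere (n j : ℕ) : Finset (Fin n → Bool) :=
  Finset.univ.filter (fun x => (Finset.univ.filter (fun i => x i = true)).card = j)

/-- The exponent function `w_d(α,β)`. -/
noncomputable def wd (α β d : ℝ) : ℝ :=
  α + binEntInv α * binEnt (1/2 + (binEntInv β - d)/(2 * binEntInv α))
    + (1 - binEntInv α) * binEnt (1/2 + (d - (1 - binEntInv β))/(2 * (1 - binEntInv α)))

/-- The noise operator `T_ρ`. -/
noncomputable def Tnoise (n : ℕ) (ρ : ℝ) (f : (Fin n → Bool) → ℝ) (y : Fin n → Bool) : ℝ :=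
  ∑ x : Fin n → Bool,
    f x * ((1 + ρ)/2) ^ (n - hammingDist x y) * ((1 - ρ)/2) ^ (hammingDist x y)

/-- The normalized `p`-norm on functions on the hypercube. -/
noncomputable def pNorm (n : ℕ) (p : ℝ) (f : (Fin n → Bool) → ℝ) : ℝ :=
  ((2:ℝ)⁻¹ ^ n * ∑ x : Fin n → Bool, |f x| ^ p) ^ (1/p)

/-- Indicator function of a set `A ⊆ {0,1}^n`. -/
def indA (n : ℕ) (A : Finset (Fin n → Bool)) : (Fin n → Bool) → ℝ :=
  fun x => if x ∈ A then 1 else 0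

lemma log2_pos : 0 < Real.log 2 := Real.log_pos one_lt_two

lemma bE_eq (p : ℝ) : binEnt p = Real.binEntropy p / Real.log 2 := by
  unfold binEnt Real.binEntropy Real.logb
  rw [Real.log_inv, Real.log_inv]
  ring

lemma bE_zero : binEnt 0 = 0 := by
  rw [bE_eq, Real.binEntropy_zero, zero_div]

lemma bE_symm (x : ℝ) : binEnt (1 - x) = binEnt x := by
  rw [bE_eq, bE_eq, Real.binEntropy_one_sub]

lemma log2_binEnt (x : ℝ) :
    Real.log 2 * binEnt x = -(x * Real.log x) - (1 - x) * Real.log (1 - x) := by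
  rw [bE_eq]
  field_simp [Real.binEntropy]
  simp only [Real.binEntropy, Real.log_inv]
  ring

lemma bE_upper {x : ℝ} (hx0 : 0 < x) (hx1 : x ≤ 1) :
    Real.log 2 * binEnt x ≤ -(x * Real.log x) + x := by
  rw [log2_binEnt]
  rcases eq_or_lt_of_le hx1 with h | h
  · subst h; simp
  · have h1 : (0:ℝ) < 1 - x := by linarith
    have h2 := Real.log_le_sub_one_of_pos (show (0:ℝ) < (1-x)⁻¹ by positivity)
    rw [Real.log_inv] at h2
    have h3 : (1-x) * (1-x)⁻¹ = 1 := mul_inv_cancel₀ h1.ne'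
    nlinarith [mul_le_mul_of_nonneg_left h2 h1.le]

lemma bE_lower {x : ℝ} (hx0 : 0 ≤ x) (hx1 : x ≤ 1) :
    -(x * Real.log x) + x - x^2 ≤ Real.log 2 * binEnt x := by
  rw [log2_binEnt]
  rcases eq_or_lt_of_le hx1 with h | h
  · subst h; simp
  · have h1 : (0:ℝ) < 1 - x := by linarith
    have h2 := Real.log_le_sub_one_of_pos h1
    nlinarith [mul_le_mul_of_nonneg_left h2 h1.le]

lemma binEntInv_le_half {α : ℝ} (hα0 : 0 < α) : binEntInv α ≤ 1/2 := by
  apply csSup_le ⟨0, Set.mem_setOf.mpr ⟨⟨le_refl 0, by norm_num⟩, by rw [bE_zero]; exact hα0.le⟩⟩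
  exact fun p hp => hp.1.2

lemma binEntInv_pos {α : ℝ} (hα0 : 0 < α) : 0 < binEntInv α := by
  have hten : Filter.Tendsto Real.binEntropy (nhds 0) (nhds 0) := by
    simpa using Real.binEntropy_continuous.tendsto 0
  have hev : ∀ᶠ p in nhds (0:ℝ), Real.binEntropy p < α * Real.log 2 :=
    hten.eventually_lt_const (by positivity)
  rw [Metric.eventually_nhds_iff] at hev
  obtain ⟨δ, hδ, hball⟩ := hev
  set p := min (δ/2) (1/2) with hp
  have hp0 : 0 < p := by positivity
  have hplt : Real.binEntropy p < α * Real.log 2 := by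
    apply hball
    rw [Real.dist_eq, sub_zero, abs_of_pos hp0]
    calc p ≤ δ/2 := min_le_left _ _
    _ < δ := by linarith
  have hmem : p ∈ {q : ℝ | q ∈ Set.Icc (0:ℝ) (1/2) ∧ binEnt q ≤ α} := by
    refine ⟨⟨hp0.le, min_le_right _ _⟩, ?_⟩
    rw [bE_eq, div_le_iff₀ log2_pos]
    exact hplt.le
  have hbdd : BddAbove {q : ℝ | q ∈ Set.Icc (0:ℝ) (1/2) ∧ binEnt q ≤ α} :=
    ⟨1/2, fun q hq => hq.1.2⟩
  exact lt_of_lt_of_le hp0 (le_csSup hbdd hmem)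

lemma wd_eq {α : ℝ} (hα0 : 0 < α) (d : ℝ) :
    wd α α d = α + binEntInv α * binEnt (d/(2*binEntInv α))
      + (1 - binEntInv α) * binEnt (d/(2*(1-binEntInv α))) := by
  have hr0 : 0 < binEntInv α := binEntInv_pos hα0
  have hr1 : binEntInv α < 1 := lt_of_le_of_lt (binEntInv_le_half hα0) (by norm_num)
  unfold wd
  have h1r : (0:ℝ) < 1 - binEntInv α := by linarith
  rw [show 1/2 + (binEntInv α - d)/(2*binEntInv α) = 1 - d/(2*binEntInv α) by
        field_simp; ring,
      show 1/2 + (d - (1-binEntInv α))/(2*(1-binEntInv α)) = d/(2*(1-binEntInv α)) by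
        rw [div_add_div _ _ (by norm_num) (by positivity)]
        rw [div_eq_div_iff (by positivity) (by positivity)]
        ring,
      bE_symm]

set_option maxHeartbeats 800000

lemma inner_lb (r s ε m : ℝ) (hr0 : 0 < r) (h1r : (0:ℝ) < 1 - r) (hs0 : 0 < s)
    (ls : Real.log s = (Real.log r + Real.log (1-r))/2)
    (hε0 : 0 < ε) (h2ε : (0:ℝ) < 2 - ε) (hm0 : 0 < m)
    (lm : Real.log m = Real.log 2 + Real.log s + Real.log ε - Real.log (2-ε))
    (d : ℝ) (hd0 : 0 ≤ d) (hd2r : d ≤ 2*r) (hr1r : r ≤ 1 - r) :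
    -(m/Real.log 2) ≤ -(r * binEnt (d/(2*r))) - (1-r) * binEnt (d/(2*(1-r)))
      - d * Real.logb 2 (ε/(2-ε)) := by
  have hL := log2_pos
  have hlogb : Real.log 2 * Real.logb 2 (ε/(2-ε)) = Real.log ε - Real.log (2-ε) := by
    rw [Real.logb, Real.log_div hε0.ne' h2ε.ne']
    field_simp
  rcases eq_or_lt_of_le hd0 with h | hd0'
  · rw [← h]
    simp only [zero_div, bE_zero, mul_zero, zero_mul, sub_zero]
    have : 0 ≤ m/Real.log 2 := div_nonneg hm0.le hL.le
    linarith
  · have hx10 : 0 < d/(2*r) := by positivity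
    have hx11 : d/(2*r) ≤ 1 := (div_le_one (by positivity)).mpr hd2r
    have hx20 : 0 < d/(2*(1-r)) := by positivity
    have hx21 : d/(2*(1-r)) ≤ 1 := (div_le_one (by positivity)).mpr (by linarith)
    have B1 := bE_upper hx10 hx11
    have B2 := bE_upper hx20 hx21
    have lx1 : Real.log (d/(2*r)) = Real.log d - Real.log 2 - Real.log r := by
      rw [Real.log_div hd0'.ne' (by positivity), Real.log_mul two_ne_zero hr0.ne']
      ring
    have lx2 : Real.log (d/(2*(1-r))) = Real.log d - Real.log 2 - Real.log (1-r) := by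
      rw [Real.log_div hd0'.ne' (by positivity), Real.log_mul two_ne_zero h1r.ne']
      ring
    have key : -m ≤ d * (Real.log d - Real.log m) - d := by
      have h := Real.log_le_sub_one_of_pos (show (0:ℝ) < m/d by positivity)
      rw [Real.log_div hm0.ne' hd0'.ne'] at h
      have hdm : d * (m/d) = m := by field_simp
      nlinarith [mul_le_mul_of_nonneg_left h hd0'.le]
    have hrx1 : r * (d/(2*r)) = d/2 := by field_simp
    have hrx2 : (1-r) * (d/(2*(1-r))) = d/2 := by field_simp
    have B1' : r * (Real.log 2 * binEnt (d/(2*r)))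
        ≤ -((d/2) * Real.log (d/(2*r))) + d/2 := by
      calc r * (Real.log 2 * binEnt (d/(2*r)))
          ≤ r * (-((d/(2*r)) * Real.log (d/(2*r))) + d/(2*r)) :=
            mul_le_mul_of_nonneg_left B1 hr0.le
        _ = -((r * (d/(2*r))) * Real.log (d/(2*r))) + r * (d/(2*r)) := by ring
        _ = -((d/2) * Real.log (d/(2*r))) + d/2 := by rw [hrx1]
    have B2' : (1-r) * (Real.log 2 * binEnt (d/(2*(1-r))))
        ≤ -((d/2) * Real.log (d/(2*(1-r)))) + d/2 := by
      calc (1-r) * (Real.log 2 * binEnt (d/(2*(1-r))))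
          ≤ (1-r) * (-((d/(2*(1-r))) * Real.log (d/(2*(1-r)))) + d/(2*(1-r))) :=
            mul_le_mul_of_nonneg_left B2 h1r.le
        _ = -(((1-r) * (d/(2*(1-r)))) * Real.log (d/(2*(1-r)))) + (1-r) * (d/(2*(1-r))) := by
            ring
        _ = -((d/2) * Real.log (d/(2*(1-r)))) + d/2 := by rw [hrx2]
    have expand2 : (d/2) * Real.log (d/(2*r)) + (d/2) * Real.log (d/(2*(1-r)))
        - d * Real.log ε + d * Real.log (2-ε) - d = d * (Real.log d - Real.log m) - d := by
      rw [lx1, lx2, lm, ls]; ring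
    have hE : -m ≤ Real.log 2 * (-(r * binEnt (d/(2*r))) - (1-r) * binEnt (d/(2*(1-r)))
        - d * Real.logb 2 (ε/(2-ε))) := by
      have e1 : Real.log 2 * (-(r * binEnt (d/(2*r))) - (1-r) * binEnt (d/(2*(1-r)))
          - d * Real.logb 2 (ε/(2-ε)))
          = -(r * (Real.log 2 * binEnt (d/(2*r))))
            - (1-r) * (Real.log 2 * binEnt (d/(2*(1-r))))
            - d * (Real.log 2 * Real.logb 2 (ε/(2-ε))) := by ring
      rw [e1, hlogb]
      linarith [B1', B2', key, expand2]
    rw [← neg_div, div_le_iff₀ hL]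
    linarith [hE]

lemma inner_ub (r s ε m : ℝ) (hr0 : 0 < r) (h1r : (0:ℝ) < 1 - r) (hs0 : 0 < s)
    (hs2 : s^2 = r*(1-r))
    (ls : Real.log s = (Real.log r + Real.log (1-r))/2)
    (hε0 : 0 < ε) (h2ε : (0:ℝ) < 2 - ε) (hm0 : 0 < m) (hm2r : m ≤ 2*r)
    (lm : Real.log m = Real.log 2 + Real.log s + Real.log ε - Real.log (2-ε))
    (hr1r : r ≤ 1 - r) :
    -(r * binEnt (m/(2*r))) - (1-r) * binEnt (m/(2*(1-r)))
      - m * Real.logb 2 (ε/(2-ε)) ≤ (-m + m^2/(4*s^2))/Real.log 2 := by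
  have hL := log2_pos
  have hlogb : Real.log 2 * Real.logb 2 (ε/(2-ε)) = Real.log ε - Real.log (2-ε) := by
    rw [Real.logb, Real.log_div hε0.ne' h2ε.ne']
    field_simp
  have hx10 : 0 < m/(2*r) := by positivity
  have hx11 : m/(2*r) ≤ 1 := (div_le_one (by positivity)).mpr hm2r
  have hx20 : 0 < m/(2*(1-r)) := by positivity
  have hx21 : m/(2*(1-r)) ≤ 1 := (div_le_one (by positivity)).mpr (by linarith)
  have B1 := bE_lower hx10.le hx11
  have B2 := bE_lower hx20.le hx21
  have lx1 : Real.log (m/(2*r)) = Real.log m - Real.log 2 - Real.log r := by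
    rw [Real.log_div hm0.ne' (by positivity), Real.log_mul two_ne_zero hr0.ne']
    ring
  have lx2 : Real.log (m/(2*(1-r))) = Real.log m - Real.log 2 - Real.log (1-r) := by
    rw [Real.log_div hm0.ne' (by positivity), Real.log_mul two_ne_zero h1r.ne']
    ring
  have hrx1 : r * (m/(2*r)) = m/2 := by field_simp
  have hrx2 : (1-r) * (m/(2*(1-r))) = m/2 := by field_simp
  have hq1 : r * (m/(2*r))^2 = m^2/(4*r) := by field_simp; ring
  have hq2 : (1-r) * (m/(2*(1-r)))^2 = m^2/(4*(1-r)) := by field_simp; ring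
  have hsum : m^2/(4*r) + m^2/(4*(1-r)) = m^2/(4*s^2) := by
    rw [hs2]; field_simp; ring
  have B1' : -((m/2) * Real.log (m/(2*r))) + m/2 - m^2/(4*r)
      ≤ r * (Real.log 2 * binEnt (m/(2*r))) := by
    calc -((m/2) * Real.log (m/(2*r))) + m/2 - m^2/(4*r)
        = r * (-((m/(2*r)) * Real.log (m/(2*r))) + m/(2*r) - (m/(2*r))^2) := by
          linear_combination (Real.log (m/(2*r))) * hrx1 - hrx1 + hq1
      _ ≤ r * (Real.log 2 * binEnt (m/(2*r))) := mul_le_mul_of_nonneg_left B1 hr0.le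
  have B2' : -((m/2) * Real.log (m/(2*(1-r)))) + m/2 - m^2/(4*(1-r))
      ≤ (1-r) * (Real.log 2 * binEnt (m/(2*(1-r)))) := by
    calc -((m/2) * Real.log (m/(2*(1-r)))) + m/2 - m^2/(4*(1-r))
        = (1-r) * (-((m/(2*(1-r))) * Real.log (m/(2*(1-r)))) + m/(2*(1-r)) - (m/(2*(1-r)))^2) := by
          linear_combination (Real.log (m/(2*(1-r)))) * hrx2 - hrx2 + hq2
      _ ≤ (1-r) * (Real.log 2 * binEnt (m/(2*(1-r)))) := mul_le_mul_of_nonneg_left B2 h1r.le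
  have expand2 : (m/2) * Real.log (m/(2*r)) + (m/2) * Real.log (m/(2*(1-r)))
      - m * Real.log ε + m * Real.log (2-ε) = 0 := by
    rw [lx1, lx2, lm, ls]; ring
  rw [le_div_iff₀ hL]
  have e1 : (-(r * binEnt (m/(2*r))) - (1-r) * binEnt (m/(2*(1-r)))
      - m * Real.logb 2 (ε/(2-ε))) * Real.log 2
      = -(r * (Real.log 2 * binEnt (m/(2*r))))
        - (1-r) * (Real.log 2 * binEnt (m/(2*(1-r))))
        - m * (Real.log 2 * Real.logb 2 (ε/(2-ε))) := by ring
  rw [e1, hlogb]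
  linarith [B1', B2', expand2, hsum]

set_option maxHeartbeats 1600000 in
lemma main_est (α : ℝ) (hα0 : 0 < α) (hα1 : α < 1) (ρ : ℝ)
    (hε0 : 0 < 1 - ρ) (hε1 : 1 - ρ < 1)
    (hεrs : (1 - ρ) * Real.sqrt (binEntInv α * (1 - binEntInv α)) ≤ binEntInv α) :
    |sInf ((fun d : ℝ =>
        2 - Real.logb 2 (1 + ρ) - wd α α d - d * Real.logb 2 ((1 - ρ)/(1 + ρ))) ''
      Set.Icc 0 (2 * binEntInv α))
      - ((1 - α) + ((1/2 - Real.sqrt (binEntInv α * (1 - binEntInv α))) / Real.log 2) * (1 - ρ))|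
      ≤ (2 / Real.log 2) * (1 - ρ)^2 := by
  have hL := log2_pos
  have hwd : ∀ d : ℝ, wd α α d = α + binEntInv α * binEnt (d/(2*binEntInv α))
      + (1 - binEntInv α) * binEnt (d/(2*(1-binEntInv α))) := wd_eq hα0
  obtain ⟨r, hrdef⟩ : ∃ r : ℝ, binEntInv α = r := ⟨_, rfl⟩
  have hr0 : 0 < r := hrdef ▸ binEntInv_pos hα0
  have hrh : r ≤ 1/2 := hrdef ▸ binEntInv_le_half hα0
  have h1r : (0:ℝ) < 1 - r := by linarith
  have hr1r : r ≤ 1 - r := by linarith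
  rw [hrdef] at hεrs hwd ⊢
  obtain ⟨s, hsdef⟩ : ∃ s : ℝ, Real.sqrt (r * (1 - r)) = s := ⟨_, rfl⟩
  have hs0 : 0 < s := hsdef ▸ Real.sqrt_pos.mpr (by positivity)
  have hs2 : s^2 = r*(1-r) := by rw [← hsdef]; exact Real.sq_sqrt (by positivity)
  have hsh : s ≤ 1/2 := by nlinarith [hs2, hs0.le]
  have ls : Real.log s = (Real.log r + Real.log (1-r))/2 := by
    rw [← hsdef, Real.log_sqrt (by positivity), Real.log_mul hr0.ne' h1r.ne']
  rw [hsdef] at hεrs ⊢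
  obtain ⟨ε, hεdef⟩ : ∃ ε : ℝ, 1 - ρ = ε := ⟨_, rfl⟩
  rw [hεdef] at hε0 hε1 hεrs ⊢
  have h2ε : (0:ℝ) < 2 - ε := by linarith
  have h1ρ : 1 + ρ = 2 - ε := by linarith
  rw [h1ρ]
  obtain ⟨m, hmdef⟩ : ∃ m : ℝ, 2*s*ε/(2-ε) = m := ⟨_, rfl⟩
  have hm0 : 0 < m := by rw [← hmdef]; positivity
  have hm2r : m ≤ 2*r := by
    have h1 : 2*s*ε/(2-ε) ≤ 2*s*ε := div_le_self (by positivity) (by linarith)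
    rw [← hmdef]
    nlinarith [hεrs]
  have lm : Real.log m = Real.log 2 + Real.log s + Real.log ε - Real.log (2-ε) := by
    rw [← hmdef, Real.log_div (by positivity) h2ε.ne',
      Real.log_mul (by positivity) hε0.ne', Real.log_mul two_ne_zero hs0.ne']
  have hinner_lb := inner_lb r s ε m hr0 h1r hs0 ls hε0 h2ε hm0 lm
  have hinner_ub := inner_ub r s ε m hr0 h1r hs0 hs2 ls hε0 h2ε hm0 hm2r lm hr1r
  -- rewrite of the function
  have hFeq : ∀ d : ℝ, 2 - Real.logb 2 (2-ε) - wd α α d - d * Real.logb 2 (ε/(2-ε))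
      = 2 - Real.logb 2 (2-ε) - α
        - (r * binEnt (d/(2*r)) + (1-r) * binEnt (d/(2*(1-r)))
          + d * Real.logb 2 (ε/(2-ε))) := by
    intro d
    rw [hwd d]
    ring
  -- logarithm estimates
  have h1ε2 : (0:ℝ) < 1 - ε/2 := by linarith
  have hsplit : Real.log (2-ε) = Real.log 2 + Real.log (1-ε/2) := by
    rw [show (2:ℝ) - ε = 2*(1-ε/2) by ring, Real.log_mul two_ne_zero h1ε2.ne']
  have hlow : Real.log (1-ε/2) ≤ -(ε/2) := by
    have := Real.log_le_sub_one_of_pos h1ε2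
    linarith
  have hup : -Real.log (1-ε/2) ≤ ε/(2-ε) := by
    have h := Real.log_le_sub_one_of_pos (show (0:ℝ) < (1-ε/2)⁻¹ by positivity)
    rw [Real.log_inv] at h
    have hid : (1-ε/2)⁻¹ - 1 = ε/(2-ε) := by
      rw [sub_eq_iff_eq_add, div_add' _ _ _ h2ε.ne', inv_eq_one_div,
        div_eq_div_iff (by linarith) h2ε.ne']
      ring
    linarith
  -- lower bound on every element of the image
  have hSlb : ∀ y ∈ (fun d : ℝ =>
        2 - Real.logb 2 (2-ε) - wd α α d - d * Real.logb 2 (ε/(2-ε))) ''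
      Set.Icc 0 (2*r),
      ((1-α) + ((1/2 - s)/Real.log 2) * ε) - (2/Real.log 2) * ε^2 ≤ y := by
    rintro y ⟨d, hd, rfl⟩
    simp only
    rw [hFeq]
    have h1 := hinner_lb d hd.1 hd.2 hr1r
    have hnum : (1/2-s)*ε - 2*ε^2 ≤ Real.log 2 - Real.log (2-ε) - m := by
      rw [hsplit]
      have hm' : m * (2-ε) = 2*s*ε := by
        rw [← hmdef]; field_simp
      nlinarith [hlow, hm', hsh, hε0.le, h2ε, hs0.le, hε1.le]
    have final_lb : ((1-α) + ((1/2 - s)/Real.log 2) * ε) - (2/Real.log 2) * ε^2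
        ≤ 2 - Real.logb 2 (2-ε) - α - m/Real.log 2 := by
      have eq1 : ((1-α) + ((1/2 - s)/Real.log 2) * ε) - (2/Real.log 2) * ε^2
          = ((1-α)*Real.log 2 + ((1/2-s)*ε - 2*ε^2))/Real.log 2 := by
        field_simp
        ring
      have eq2 : 2 - Real.logb 2 (2-ε) - α - m/Real.log 2
          = ((2-α)*Real.log 2 - Real.log (2-ε) - m)/Real.log 2 := by
        rw [Real.logb]
        field_simp
        ring
      rw [eq1, eq2, div_le_div_iff_of_pos_right hL]
      linarith [hnum]
    linarith [h1, final_lb]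
  -- upper bound at d = m
  have hSub : 2 - Real.logb 2 (2-ε) - wd α α m - m * Real.logb 2 (ε/(2-ε))
      ≤ ((1-α) + ((1/2 - s)/Real.log 2) * ε) + (2/Real.log 2) * ε^2 := by
    rw [hFeq]
    have h1 := hinner_ub
    have hm2 : m^2/(4*s^2) = ε^2/(2-ε)^2 := by
      rw [← hmdef]
      field_simp
      ring
    have hnum : Real.log 2 - Real.log (2-ε) + (-m + m^2/(4*s^2))
        ≤ (1/2-s)*ε + 2*ε^2 := by
      rw [hsplit, hm2]
      have e1 : ε/(2-ε) ≤ ε/2 + ε^2 := by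
        rw [div_le_iff₀ h2ε]; nlinarith [hε0.le, hε1.le]
      have e2 : ε^2/(2-ε)^2 ≤ ε^2 := by
        apply div_le_self (by positivity); nlinarith
      have e3 : s*ε ≤ m := by
        rw [← hmdef, le_div_iff₀ h2ε]; nlinarith [hs0.le, hε0.le]
      linarith [hup, e1, e2, e3]
    have final_ub : 2 - Real.logb 2 (2-ε) - α + (-m + m^2/(4*s^2))/Real.log 2
        ≤ ((1-α) + ((1/2 - s)/Real.log 2) * ε) + (2/Real.log 2) * ε^2 := by
      have eqA : 2 - Real.logb 2 (2-ε) - α + (-m + m^2/(4*s^2))/Real.log 2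
          = ((2-α)*Real.log 2 + (- Real.log (2-ε) + (-m + m^2/(4*s^2))))/Real.log 2 := by
        rw [Real.logb]
        field_simp
        ring
      have eqB : ((1-α) + ((1/2 - s)/Real.log 2) * ε) + (2/Real.log 2) * ε^2
          = ((1-α)*Real.log 2 + ((1/2-s)*ε + 2*ε^2))/Real.log 2 := by
        field_simp
        ring
      rw [eqA, eqB, div_le_div_iff_of_pos_right hL]
      linarith [hnum]
    linarith [h1, final_ub]
  -- assemble
  have hne : ((fun d : ℝ =>
        2 - Real.logb 2 (2-ε) - wd α α d - d * Real.logb 2 (ε/(2-ε))) ''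
      Set.Icc 0 (2*r)).Nonempty :=
    ⟨_, Set.mem_image_of_mem _ (show (0:ℝ) ∈ Set.Icc 0 (2*r) from ⟨le_refl 0, by positivity⟩)⟩
  have hbdd : BddBelow ((fun d : ℝ =>
        2 - Real.logb 2 (2-ε) - wd α α d - d * Real.logb 2 (ε/(2-ε))) ''
      Set.Icc 0 (2*r)) :=
    ⟨((1-α) + ((1/2 - s)/Real.log 2) * ε) - (2/Real.log 2) * ε^2, fun y hy => hSlb y hy⟩
  have hmm : (2 - Real.logb 2 (2-ε) - wd α α m - m * Real.logb 2 (ε/(2-ε)))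
      ∈ (fun d : ℝ =>
        2 - Real.logb 2 (2-ε) - wd α α d - d * Real.logb 2 (ε/(2-ε))) ''
      Set.Icc 0 (2*r) := Set.mem_image_of_mem _ ⟨hm0.le, hm2r⟩
  have hub : sInf ((fun d : ℝ =>
        2 - Real.logb 2 (2-ε) - wd α α d - d * Real.logb 2 (ε/(2-ε))) ''
      Set.Icc 0 (2*r)) ≤ ((1-α) + ((1/2 - s)/Real.log 2) * ε) + (2/Real.log 2) * ε^2 :=
    le_trans (csInf_le hbdd hmm) hSub
  have hlb : ((1-α) + ((1/2 - s)/Real.log 2) * ε) - (2/Real.log 2) * ε^2 ≤ sInf ((fun d : ℝ =>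
        2 - Real.logb 2 (2-ε) - wd α α d - d * Real.logb 2 (ε/(2-ε))) ''
      Set.Icc 0 (2*r)) := le_csInf hne hSlb
  rw [abs_le]
  exact ⟨by linarith, by linarith⟩

/-- expansion of the spherical exponent for `α = β` as `ρ → 1⁻`. -/
theorem stmt_3 (α : ℝ) (hα : α ∈ Set.Ioo (0:ℝ) 1) :
    (fun ρ : ℝ =>
        sInf ((fun d : ℝ =>
            2 - Real.logb 2 (1 + ρ) - wd α α d - d * Real.logb 2 ((1 - ρ)/(1 + ρ))) ''
          Set.Icc 0 (2 * binEntInv α))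
        - (1 - α)
        - ((1/2 - Real.sqrt (binEntInv α * (1 - binEntInv α))) / Real.log 2) * (1 - ρ))
      =o[nhdsWithin 1 (Set.Iio 1)] fun ρ : ℝ => 1 - ρ := by
  obtain ⟨hα0, hα1⟩ := hα
  have hr0 : 0 < binEntInv α := binEntInv_pos hα0
  have hrh : binEntInv α ≤ 1/2 := binEntInv_le_half hα0
  have hs0 : 0 < Real.sqrt (binEntInv α * (1 - binEntInv α)) :=
    Real.sqrt_pos.mpr (by nlinarith)
  have hδ0 : 0 < min 1 (binEntInv α / Real.sqrt (binEntInv α * (1 - binEntInv α))) :=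
    lt_min one_pos (by positivity)
  have hev : ∀ᶠ ρ in nhdsWithin (1:ℝ) (Set.Iio 1),
      ‖sInf ((fun d : ℝ =>
            2 - Real.logb 2 (1 + ρ) - wd α α d - d * Real.logb 2 ((1 - ρ)/(1 + ρ))) ''
          Set.Icc 0 (2 * binEntInv α))
        - (1 - α)
        - ((1/2 - Real.sqrt (binEntInv α * (1 - binEntInv α))) / Real.log 2) * (1 - ρ)‖
      ≤ (2/Real.log 2) * ‖(1 - ρ)^2‖ := by
    filter_upwards [Ioo_mem_nhdsLT_of_mem (show (1:ℝ) ∈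
      Set.Ioc (1 - min 1 (binEntInv α / Real.sqrt (binEntInv α * (1 - binEntInv α)))) 1 from
      ⟨by linarith, le_refl 1⟩)] with ρ hρ
    obtain ⟨hρ1, hρ2⟩ := hρ
    have hδ1 : min 1 (binEntInv α / Real.sqrt (binEntInv α * (1 - binEntInv α))) ≤ 1 :=
      min_le_left _ _
    have hε0 : 0 < 1 - ρ := by linarith
    have hε1 : 1 - ρ < 1 := by linarith
    have hεrs : (1 - ρ) * Real.sqrt (binEntInv α * (1 - binEntInv α)) ≤ binEntInv α := by
      have hmin : 1 - ρ < min 1 (binEntInv α / Real.sqrt (binEntInv α * (1 - binEntInv α))) := by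
        linarith
      have h1 : 1 - ρ ≤ binEntInv α / Real.sqrt (binEntInv α * (1 - binEntInv α)) :=
        le_of_lt (lt_of_lt_of_le hmin (min_le_right _ _))
      rw [le_div_iff₀ hs0] at h1
      exact h1
    rw [Real.norm_eq_abs, Real.norm_eq_abs,
      abs_of_nonneg (by positivity : (0:ℝ) ≤ (1 - ρ)^2), sub_sub]
    exact main_est α hα0 hα1 ρ hε0 hε1 hεrs
  have hO : (fun ρ : ℝ =>
        sInf ((fun d : ℝ =>
            2 - Real.logb 2 (1 + ρ) - wd α α d - d * Real.logb 2 ((1 - ρ)/(1 + ρ))) ''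
          Set.Icc 0 (2 * binEntInv α))
        - (1 - α)
        - ((1/2 - Real.sqrt (binEntInv α * (1 - binEntInv α))) / Real.log 2) * (1 - ρ))
      =O[nhdsWithin 1 (Set.Iio 1)] (fun ρ : ℝ => (1 - ρ)^2) :=
    IsBigO.of_bound (2/Real.log 2) hev
  have ho : (fun ρ : ℝ => (1 - ρ)^2) =o[nhdsWithin (1:ℝ) (Set.Iio 1)]
      (fun ρ : ℝ => 1 - ρ) := by
    have h0 : Filter.Tendsto (fun ρ : ℝ => 1 - ρ) (nhdsWithin (1:ℝ) (Set.Iio 1)) (nhds 0) := by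
      have h1 : Filter.Tendsto (fun ρ : ℝ => 1 - ρ) (nhds (1:ℝ)) (nhds 0) := by
        have h2 : Filter.Tendsto (fun ρ : ℝ => 1 - ρ) (nhds (1:ℝ)) (nhds (1 - 1)) :=
          Filter.Tendsto.const_sub 1 Filter.tendsto_id
        simpa using h2
      exact h1.mono_left nhdsWithin_le_nhds
    have h1 : (fun ρ : ℝ => 1 - ρ) =o[nhdsWithin (1:ℝ) (Set.Iio 1)] (fun _ => (1:ℝ)) :=
      (isLittleO_one_iff ℝ).mpr h0
    have h2 := h1.mul_isBigO (isBigO_refl (fun ρ : ℝ => 1 - ρ) (nhdsWithin (1:ℝ) (Set.Iio 1)))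
    simpa [pow_two] using h2
  exact hO.trans_isLittleO ho
end

section
/- Let n, i, j, k be natural numbers with i ≤ j ≤ n, j − i ≤ k ≤ i + j, and i + j − k even. Then the number of pairs (a,b) ∈ S_i × S_j with d(a,b) = k equals C(n,i) · C(i, (i+j−k)/2) · C(n−i, (j−i+k)/2), where C(·,·) denotes the binomial coefficient. -/
open Finset Asymptotics Filter

/-- support of a boolean vector -/
def bsupp {n : ℕ} (x : Fin n → Bool) : Finset (Fin n) :=
  Finset.univ.filter (fun i => x i = true)

lemma mem_bsupp {n : ℕ} (x : Fin n → Bool) (idx : Fin n) :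
    idx ∈ bsupp x ↔ x idx = true := by simp [bsupp]

lemma mem_hSphere {n j : ℕ} (x : Fin n → Bool) :
    x ∈ hSphere n j ↔ (bsupp x).card = j := by simp [hSphere, bsupp]

lemma hammingDist_eq_bsupp {n : ℕ} (a b : Fin n → Bool) :
    hammingDist a b = (bsupp a \ bsupp b).card + (bsupp b \ bsupp a).card := by
  rw [← card_union_of_disjoint disjoint_sdiff_sdiff]
  show (Finset.univ.filter fun idx => a idx ≠ b idx).card = _
  congr 1
  ext idx
  simp only [mem_filter, mem_univ, true_and, mem_union, mem_sdiff, mem_bsupp]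
  cases h1 : a idx <;> cases h2 : b idx <;> simp [mem_bsupp, h1, h2]

lemma bsupp_decide {n : ℕ} (U : Finset (Fin n)) :
    bsupp (fun idx => decide (idx ∈ U)) = U := by
  ext idx; simp [mem_bsupp]

lemma card_hSphere (n j : ℕ) : (hSphere n j).card = n.choose j := by
  rw [show n.choose j = ((Finset.univ : Finset (Fin n)).powersetCard j).card by
    simp]
  apply card_nbij' (fun x => bsupp x) (fun U => fun idx => decide (idx ∈ U))
  · intro x hx
    simp only [mem_coe, mem_hSphere] at hx
    simp [mem_powersetCard, hx]
  · intro U hU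
    simp only [mem_coe, mem_powersetCard] at hU
    simp only [mem_coe]; rw [mem_hSphere, bsupp_decide]
    exact hU.2
  · intro x _
    funext idx
    cases h : x idx <;> simp [mem_bsupp, h]
  · intro U _
    exact bsupp_decide U

lemma inner_count (n i j k : ℕ) (hij : i ≤ j) (hjn : j ≤ n)
    (hk1 : j - i ≤ k) (hk2 : k ≤ i + j) (hpar : Even (i + j - k))
    (a : Fin n → Bool) (ha : a ∈ hSphere n i) :
    ((hSphere n j).filter (fun b => hammingDist a b = k)).card
      = i.choose ((i + j - k)/2) * ((n - i)).choose ((j - i + k)/2) := by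
  obtain ⟨m, hm⟩ := hpar
  rw [mem_hSphere] at ha
  have hAcard : (bsupp a).card = i := ha
  have hAn : ((bsupp a)ᶜ).card = n - i := by
    rw [card_compl, hAcard]; simp
  set u := (i + j - k)/2 with hu
  set s := (j - i + k)/2 with hs
  have hu2 : 2 * u = i + j - k := by omega
  have hs2 : 2 * s = j - i + k := by omega
  rw [show i.choose u * (n-i).choose s
      = (((bsupp a).powersetCard u) ×ˢ (((bsupp a)ᶜ).powersetCard s)).card by
    simp [hAcard, hAn]]
  apply card_nbij' (fun b => (bsupp b ∩ bsupp a, bsupp b \ bsupp a))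
    (fun P => fun idx => decide (idx ∈ P.1 ∪ P.2))
  · intro b hb
    simp only [mem_coe, mem_filter, mem_hSphere] at hb
    obtain ⟨hB, hd⟩ := hb
    rw [hammingDist_eq_bsupp] at hd
    have h1 : (bsupp b ∩ bsupp a).card + (bsupp b \ bsupp a).card = j := by
      rw [card_inter_add_card_sdiff, hB]
    have h2 : (bsupp a ∩ bsupp b).card + (bsupp a \ bsupp b).card = i := by
      rw [card_inter_add_card_sdiff, hAcard]
    have h3 : (bsupp a ∩ bsupp b).card = (bsupp b ∩ bsupp a).card := by rw [inter_comm]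
    simp only [mem_coe, mem_product, mem_powersetCard]
    refine ⟨⟨inter_subset_right, ?_⟩, ⟨?_, ?_⟩⟩
    · omega
    · intro x hx
      simp only [Finset.mem_sdiff] at hx
      simp [hx.2]
    · omega
  · intro P hP
    simp only [mem_coe, mem_product, mem_powersetCard] at hP
    obtain ⟨⟨hS, hScard⟩, hT, hTcard⟩ := hP
    have hdisj : Disjoint P.1 P.2 := by
      refine disjoint_left.2 fun x hx hx2 => ?_
      have := hT hx2
      simp only [mem_compl] at this
      exact this (hS hx)
    simp only [mem_coe, mem_filter, mem_hSphere, bsupp_decide]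
    constructor
    · rw [card_union_of_disjoint hdisj]; omega
    · rw [hammingDist_eq_bsupp, bsupp_decide]
      have e1 : bsupp a \ (P.1 ∪ P.2) = bsupp a \ P.1 := by
        ext x
        simp only [Finset.mem_sdiff, mem_union]
        constructor
        · rintro ⟨h1, h2⟩; exact ⟨h1, fun h => h2 (Or.inl h)⟩
        · rintro ⟨h1, h2⟩
          refine ⟨h1, fun h => ?_⟩
          rcases h with h | h
          · exact h2 h
          · have := hT h; simp only [mem_compl] at this; exact this h1
      have e2 : (P.1 ∪ P.2) \ bsupp a = P.2 := by
        ext x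
        simp only [Finset.mem_sdiff, mem_union]
        constructor
        · rintro ⟨h1 | h1, h2⟩
          · exact absurd (hS h1) h2
          · exact h1
        · intro h
          have := hT h; simp only [mem_compl] at this
          exact ⟨Or.inr h, this⟩
      rw [e1, e2, card_sdiff_of_subset hS, hAcard]
      omega
  · intro b hb
    simp only [mem_coe, mem_filter, mem_hSphere] at hb
    funext idx
    have : (bsupp b ∩ bsupp a) ∪ (bsupp b \ bsupp a) = bsupp b := by
      ext x; simp only [mem_union, mem_inter, Finset.mem_sdiff]; tauto
    show decide (idx ∈ (bsupp b ∩ bsupp a) ∪ (bsupp b \ bsupp a)) = b idx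
    rw [this]
    cases h : b idx <;> simp [mem_bsupp, h]
  · intro P hP
    simp only [mem_coe, mem_product, mem_powersetCard] at hP
    obtain ⟨⟨hS, _⟩, hT, _⟩ := hP
    have hd : ∀ x ∈ P.2, x ∉ bsupp a := by
      intro x hx
      have := hT hx; simpa [mem_compl] using this
    have e1 : (P.1 ∪ P.2) ∩ bsupp a = P.1 := by
      ext x
      simp only [mem_inter, mem_union]
      constructor
      · rintro ⟨h1 | h1, h2⟩
        · exact h1
        · exact absurd h2 (hd x h1)
      · intro h; exact ⟨Or.inl h, hS h⟩
    have e2 : (P.1 ∪ P.2) \ bsupp a = P.2 := by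
      ext x
      simp only [Finset.mem_sdiff, mem_union]
      constructor
      · rintro ⟨h1 | h1, h2⟩
        · exact absurd (hS h1) h2
        · exact h1
      · intro h; exact ⟨Or.inr h, hd x h⟩
    show (bsupp (fun idx => decide (idx ∈ P.1 ∪ P.2)) ∩ bsupp a,
          bsupp (fun idx => decide (idx ∈ P.1 ∪ P.2)) \ bsupp a) = P
    rw [bsupp_decide, e1, e2]

/-- counting pairs of points on two Hamming spheres at a given distance. -/
theorem stmt_7 (n i j k : ℕ) (hij : i ≤ j) (hjn : j ≤ n)
    (hk1 : j - i ≤ k) (hk2 : k ≤ i + j) (hpar : Even (i + j - k)) :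
    ((hSphere n i ×ˢ hSphere n j).filter
        (fun p : (Fin n → Bool) × (Fin n → Bool) => hammingDist p.1 p.2 = k)).card
      = n.choose i * i.choose ((i + j - k)/2) * (n - i).choose ((j - i + k)/2) := by
  rw [card_filter, Finset.sum_product]
  have : ∀ a ∈ hSphere n i,
      (∑ b ∈ hSphere n j, if hammingDist a b = k then 1 else 0)
        = i.choose ((i + j - k)/2) * (n - i).choose ((j - i + k)/2) := by
    intro a ha
    rw [← card_filter]
    exact inner_count n i j k hij hjn hk1 hk2 hpar a ha
  rw [Finset.sum_congr rfl this, Finset.sum_const, card_hSphere, smul_eq_mul, mul_assoc]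
end

section
/- Let n ∈ ℕ, ρ ∈ (0,1), η ∈ (0,1], and let A, B ⊆ {0,1}^n be sets with |A| = |B| = η·2^n. Then P_ρ(A×B) ≤ η^{2/(1+ρ)}. -/
open Finset Asymptotics Filter

section HyperAux
open Real

-- L0
lemma L0 {c s : ℝ} (hc : c ≤ 0) (hs0 : 0 ≤ s) (hs1 : s < 1) :
    2 ≤ (1+s)^c + (1-s)^c := by
  have h1 : (0:ℝ) < 1 + s := by linarith
  have h2 : (0:ℝ) < 1 - s := by linarith
  set x := (1+s)^c with hx
  set y := (1-s)^c with hy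
  have hxpos : 0 < x := Real.rpow_pos_of_pos h1 c
  have hypos : 0 < y := Real.rpow_pos_of_pos h2 c
  have hxy : 1 ≤ x * y := by
    rw [hx, hy, ← Real.mul_rpow h1.le h2.le]
    apply Real.one_le_rpow_of_pos_of_le_one_of_nonpos
    · nlinarith
    · nlinarith
    · exact hc
  nlinarith [sq_nonneg (x - y)]

-- L1 : (1+t)^ρ - (1-t)^ρ - 2ρt ≥ 0 on [0,1]
lemma L1 {ρ : ℝ} (hρ : 0 < ρ) (hρ1 : ρ < 1) {t : ℝ} (ht0 : 0 ≤ t) (ht1 : t ≤ 1) :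
    2*ρ*t ≤ (1+t)^ρ - (1-t)^ρ := by
  set g : ℝ → ℝ := fun u => (1+u)^ρ - (1-u)^ρ - 2*ρ*u with hg
  have hderiv : ∀ u ∈ Set.Ioo (0:ℝ) 1, HasDerivAt g
      (ρ*(1+u)^(ρ-1) + ρ*(1-u)^(ρ-1) - 2*ρ) u := by
    intro u hu
    have h1 : (0:ℝ) < 1 + u := by linarith [hu.1]
    have h2 : (0:ℝ) < 1 - u := by linarith [hu.2]
    have d1 : HasDerivAt (fun v : ℝ => (1+v)^ρ) (ρ*(1+u)^(ρ-1)) u := by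
      have := HasDerivAt.rpow_const (p := ρ) ((hasDerivAt_id u).const_add 1) (Or.inl h1.ne')
      simpa using this.congr_deriv (by simp [id])
    have d2 : HasDerivAt (fun v : ℝ => (1-v)^ρ) (-(ρ*(1-u)^(ρ-1))) u := by
      have := HasDerivAt.rpow_const (p := ρ) ((hasDerivAt_id u).const_sub 1) (Or.inl h2.ne')
      simpa using this.congr_deriv (by simp [id])
    have d3 : HasDerivAt (fun v : ℝ => 2*ρ*v) (2*ρ) u := by
      simpa using (hasDerivAt_id u).const_mul (2*ρ)
    have := (d1.sub d2).sub d3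
    exact this.congr_deriv (by ring)
  have hmono : MonotoneOn g (Set.Icc (0:ℝ) 1) := by
    apply monotoneOn_of_deriv_nonneg (convex_Icc 0 1)
    · apply ContinuousOn.sub
      apply ContinuousOn.sub
      · apply ContinuousOn.rpow_const (by fun_prop)
        intro x _; right; exact hρ.le
      · apply ContinuousOn.rpow_const (by fun_prop)
        intro x _; right; exact hρ.le
      · fun_prop
    · intro u hu
      rw [interior_Icc] at hu
      exact ((hderiv u hu).differentiableAt).differentiableWithinAt
    · intro u hu
      rw [interior_Icc] at hu
      rw [(hderiv u hu).deriv]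
      have := L0 (c := ρ - 1) (s := u) (by linarith) hu.1.le hu.2
      nlinarith
  have h0 : g 0 = 0 := by simp [hg]
  have := hmono (Set.mem_Icc.mpr ⟨le_refl 0, zero_le_one⟩) (Set.mem_Icc.mpr ⟨ht0, ht1⟩) ht0
  rw [h0] at this
  simp only [hg] at this
  linarith

-- L2: (1+t)^(1+ρ) + (1-t)^(1+ρ) ≥ 2 + (1+ρ)*ρ*t^2 on [0,1]
lemma L2 {ρ : ℝ} (hρ : 0 < ρ) (hρ1 : ρ < 1) {t : ℝ} (ht0 : 0 ≤ t) (ht1 : t ≤ 1) :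
    2 + (1+ρ)*ρ*t^2 ≤ (1+t)^(1+ρ) + (1-t)^(1+ρ) := by
  have hq1 : (1:ℝ) ≤ 1 + ρ := by linarith
  set h : ℝ → ℝ := fun u => (1+u)^(1+ρ) + (1-u)^(1+ρ) - (2 + (1+ρ)*ρ*u^2) with hh
  have hderiv : ∀ u : ℝ, HasDerivAt h
      ((1+ρ)*(1+u)^ρ - (1+ρ)*(1-u)^ρ - 2*(1+ρ)*ρ*u) u := by
    intro u
    have d1 : HasDerivAt (fun v : ℝ => (1+v)^(1+ρ)) ((1+ρ)*(1+u)^ρ) u := by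
      have := HasDerivAt.rpow_const (p := 1+ρ) ((hasDerivAt_id u).const_add 1) (Or.inr hq1)
      simpa using this.congr_deriv (by simp [id])
    have d2 : HasDerivAt (fun v : ℝ => (1-v)^(1+ρ)) (-((1+ρ)*(1-u)^ρ)) u := by
      have := HasDerivAt.rpow_const (p := 1+ρ) ((hasDerivAt_id u).const_sub 1) (Or.inr hq1)
      simpa using this.congr_deriv (by simp [id]; ring)
    have d3 : HasDerivAt (fun v : ℝ => 2 + (1+ρ)*ρ*v^2) ((1+ρ)*ρ*(2*u)) u := by
      simpa using ((hasDerivAt_pow 2 u).const_mul ((1+ρ)*ρ)).const_add 2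
    exact ((d1.add d2).sub d3).congr_deriv (by ring)
  have hmono : MonotoneOn h (Set.Icc (0:ℝ) 1) := by
    apply monotoneOn_of_deriv_nonneg (convex_Icc 0 1)
    · have hd : Differentiable ℝ h := fun u => (hderiv u).differentiableAt
      exact hd.continuous.continuousOn
    · intro u hu
      exact (hderiv u).differentiableAt.differentiableWithinAt
    · intro u hu
      rw [interior_Icc] at hu
      rw [(hderiv u).deriv]
      have := L1 hρ hρ1 hu.1.le hu.2.le
      nlinarith
  have h0 : h 0 = 0 := by norm_num [hh]
  have := hmono (Set.mem_Icc.mpr ⟨le_refl 0, zero_le_one⟩) (Set.mem_Icc.mpr ⟨ht0, ht1⟩) ht0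
  rw [h0] at this
  simp only [hh] at this
  linarith

-- Lemma A: 1 + ρ t² ≤ (((1+t)^q+(1−t)^q)/2)^(2/q)
lemma LA {ρ : ℝ} (hρ : 0 < ρ) (hρ1 : ρ < 1) {t : ℝ} (ht0 : 0 ≤ t) (ht1 : t ≤ 1) :
    1 + ρ*t^2 ≤ (((1+t)^(1+ρ) + (1-t)^(1+ρ))/2)^(2/(1+ρ)) := by
  have hq0 : (0:ℝ) < 1 + ρ := by linarith
  have hm : 1 + (1+ρ)*ρ*t^2/2 ≤ ((1+t)^(1+ρ) + (1-t)^(1+ρ))/2 := by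
    have := L2 hρ hρ1 ht0 ht1; linarith
  have hs : (0:ℝ) ≤ (1+ρ)*ρ*t^2/2 := by positivity
  have hbern : 1 + (2/(1+ρ)) * ((1+ρ)*ρ*t^2/2) ≤ (1 + (1+ρ)*ρ*t^2/2)^(2/(1+ρ)) :=
    one_add_mul_self_le_rpow_one_add (by linarith) (by rw [le_div_iff₀ hq0]; linarith)
  have heq : (2/(1+ρ)) * ((1+ρ)*ρ*t^2/2) = ρ*t^2 := by field_simp
  calc 1 + ρ*t^2 ≤ (1 + (1+ρ)*ρ*t^2/2)^(2/(1+ρ)) := by rw [← heq]; exact hbern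
    _ ≤ (((1+t)^(1+ρ) + (1-t)^(1+ρ))/2)^(2/(1+ρ)) :=
        Real.rpow_le_rpow (by positivity) hm (by positivity)

-- Lemma B (with wlog b ≤ a handled)
lemma LBaux {ρ : ℝ} (hρ : 0 < ρ) (hρ1 : ρ < 1) {a b : ℝ} (ha : 0 ≤ b) (hba : b ≤ a) :
    ((a+b)/2)^2 + ρ*((a-b)/2)^2 ≤ ((a^(1+ρ)+b^(1+ρ))/2)^(2/(1+ρ)) := by
  have hq0 : (0:ℝ) < 1 + ρ := by linarith
  have ha0 : 0 ≤ a := le_trans ha hba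
  rcases eq_or_lt_of_le (le_trans ha hba) with h0 | hapos
  · -- a = 0 hence b = 0
    have ha' : a = 0 := h0.symm
    have hb' : b = 0 := le_antisymm (ha' ▸ hba) ha
    simp [ha', hb', Real.zero_rpow hq0.ne']
    positivity
  · set s : ℝ := (a+b)/2 with hs
    have hspos : 0 < s := by
      rw [hs]; linarith
    set t : ℝ := (a-b)/(a+b) with ht
    have ht0 : 0 ≤ t := by
      apply div_nonneg (by linarith) (by linarith)
    have ht1 : t ≤ 1 := by
      rw [ht, div_le_one (by linarith)]; linarith
    have hab : a = s*(1+t) ∧ b = s*(1-t) := by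
      constructor <;> (rw [hs, ht]; field_simp; ring)
    have haq : a^(1+ρ) = s^(1+ρ) * (1+t)^(1+ρ) := by
      rw [hab.1, Real.mul_rpow hspos.le (by linarith)]
    have hbq : b^(1+ρ) = s^(1+ρ) * (1-t)^(1+ρ) := by
      rw [hab.2, Real.mul_rpow hspos.le (by linarith)]
    have key := LA hρ hρ1 ht0 ht1
    have hnn : (0:ℝ) ≤ ((1+t)^(1+ρ) + (1-t)^(1+ρ))/2 := by
      have h1 := Real.rpow_nonneg (by linarith : (0:ℝ) ≤ 1+t) (1+ρ)
      have h2 := Real.rpow_nonneg (by linarith : (0:ℝ) ≤ 1-t) (1+ρ)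
      linarith
    have hpow : (s^(1+ρ))^(2/(1+ρ)) = s^2 := by
      rw [← Real.rpow_natCast s 2, ← Real.rpow_mul hspos.le]
      congr 1
      push_cast
      field_simp
    have hrhs : ((a^(1+ρ)+b^(1+ρ))/2)^(2/(1+ρ))
        = s^2 * (((1+t)^(1+ρ) + (1-t)^(1+ρ))/2)^(2/(1+ρ)) := by
      rw [haq, hbq]
      rw [show s^(1+ρ) * (1+t)^(1+ρ) + s^(1+ρ) * (1-t)^(1+ρ)
            = s^(1+ρ) * ((1+t)^(1+ρ) + (1-t)^(1+ρ)) by ring]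
      rw [mul_div_assoc, Real.mul_rpow (Real.rpow_nonneg hspos.le _) hnn, hpow]
    rw [hrhs]
    have hlhs : ((a+b)/2)^2 + ρ*((a-b)/2)^2 = s^2 * (1 + ρ*t^2) := by
      rw [hab.1, hab.2]; field_simp; ring
    rw [hlhs]
    exact mul_le_mul_of_nonneg_left key (by positivity)

lemma LB {ρ : ℝ} (hρ : 0 < ρ) (hρ1 : ρ < 1) {a b : ℝ} (ha : 0 ≤ a) (hb : 0 ≤ b) :
    ((a+b)/2)^2 + ρ*((a-b)/2)^2 ≤ ((a^(1+ρ)+b^(1+ρ))/2)^(2/(1+ρ)) := by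
  rcases le_total b a with h | h
  · exact LBaux hρ hρ1 hb h
  · have := LBaux hρ hρ1 ha h
    calc ((a+b)/2)^2 + ρ*((a-b)/2)^2 = ((b+a)/2)^2 + ρ*((b-a)/2)^2 := by ring
      _ ≤ ((b^(1+ρ)+a^(1+ρ))/2)^(2/(1+ρ)) := this
      _ = ((a^(1+ρ)+b^(1+ρ))/2)^(2/(1+ρ)) := by rw [add_comm]

-- Lemma C : two-point two-function hypercontractivity
lemma LC {ρ : ℝ} (hρ : 0 < ρ) (hρ1 : ρ < 1) {a0 a1 b0 b1 : ℝ}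
    (ha0 : 0 ≤ a0) (ha1 : 0 ≤ a1) (hb0 : 0 ≤ b0) (hb1 : 0 ≤ b1) :
    ((1+ρ)/4)*(a0*b0+a1*b1) + ((1-ρ)/4)*(a0*b1+a1*b0)
      ≤ ((a0^(1+ρ)+a1^(1+ρ))/2)^(1/(1+ρ)) * ((b0^(1+ρ)+b1^(1+ρ))/2)^(1/(1+ρ)) := by
  have hq0 : (0:ℝ) < 1 + ρ := by linarith
  set U := (a0+a1)/2; set V := (a0-a1)/2; set U' := (b0+b1)/2; set V' := (b0-b1)/2
  set MA := ((a0^(1+ρ)+a1^(1+ρ))/2)^(1/(1+ρ)) with hMA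
  set MB := ((b0^(1+ρ)+b1^(1+ρ))/2)^(1/(1+ρ)) with hMB
  have hMA0 : 0 ≤ MA := Real.rpow_nonneg (by positivity) _
  have hMB0 : 0 ≤ MB := Real.rpow_nonneg (by positivity) _
  have hnnA : (0:ℝ) ≤ (a0^(1+ρ)+a1^(1+ρ))/2 := by
    have h1 := Real.rpow_nonneg ha0 (1+ρ); have h2 := Real.rpow_nonneg ha1 (1+ρ); linarith
  have hnnB : (0:ℝ) ≤ (b0^(1+ρ)+b1^(1+ρ))/2 := by
    have h1 := Real.rpow_nonneg hb0 (1+ρ); have h2 := Real.rpow_nonneg hb1 (1+ρ); linarith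
  have hMA2 : U^2 + ρ*V^2 ≤ MA^2 := by
    have h := LB hρ hρ1 ha0 ha1
    have e : MA^2 = ((a0^(1+ρ)+a1^(1+ρ))/2)^(2/(1+ρ)) := by
      rw [hMA, ← Real.rpow_natCast (((a0^(1+ρ)+a1^(1+ρ))/2)^(1/(1+ρ))) 2,
        ← Real.rpow_mul hnnA]
      congr 1
      push_cast; ring
    rw [e]; exact h
  have hMB2 : U'^2 + ρ*V'^2 ≤ MB^2 := by
    have h := LB hρ hρ1 hb0 hb1
    have e : MB^2 = ((b0^(1+ρ)+b1^(1+ρ))/2)^(2/(1+ρ)) := by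
      rw [hMB, ← Real.rpow_natCast (((b0^(1+ρ)+b1^(1+ρ))/2)^(1/(1+ρ))) 2,
        ← Real.rpow_mul hnnB]
      congr 1
      push_cast; ring
    rw [e]; exact h
  have hLHS : ((1+ρ)/4)*(a0*b0+a1*b1) + ((1-ρ)/4)*(a0*b1+a1*b0) = U*U' + ρ*(V*V') := by
    simp only [U, V, U', V']; ring
  rw [hLHS]
  have hCS : (U*U' + ρ*(V*V'))^2 ≤ (U^2 + ρ*V^2) * (U'^2 + ρ*V'^2) := by
    nlinarith [sq_nonneg (U*V' - V*U'), hρ.le]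
  have h1 : (0:ℝ) ≤ U^2 + ρ*V^2 := by positivity
  have h2 : (0:ℝ) ≤ U'^2 + ρ*V'^2 := by positivity
  nlinarith [hCS, hMA2, hMB2, mul_le_mul hMA2 hMB2 h2 (by positivity : (0:ℝ) ≤ MA^2),
    sq_nonneg (U*U' + ρ*(V*V')), mul_nonneg hMA0 hMB0]

lemma sum_succ_eq {n : ℕ} (h : (Fin (n+1) → Bool) → ℝ) :
    ∑ z : Fin (n+1) → Bool, h z = ∑ s : Bool, ∑ x : Fin n → Bool, h (Fin.cons s x) := by
  rw [← (Fin.consEquiv (fun _ : Fin (n+1) => Bool)).sum_comp h, Fintype.sum_prod_type]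
  rfl

lemma main_ind {ρ : ℝ} (hρ : 0 < ρ) (hρ1 : ρ < 1) :
    ∀ (n : ℕ) (f g : (Fin n → Bool) → ℝ), (∀ x, 0 ≤ f x) → (∀ x, 0 ≤ g x) →
    ∑ x : Fin n → Bool, ∑ y : Fin n → Bool,
        (∏ i, (if x i = y i then (1+ρ)/4 else (1-ρ)/4)) * f x * g y
      ≤ ((2:ℝ)⁻¹^n * ∑ x, f x ^ (1+ρ))^(1/(1+ρ)) *
        ((2:ℝ)⁻¹^n * ∑ x, g x ^ (1+ρ))^(1/(1+ρ)) := by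
  have hq0 : (0:ℝ) < 1 + ρ := by linarith
  intro n
  induction n with
  | zero =>
    intro f g hf hg
    simp only [Fintype.sum_unique, Finset.univ_eq_empty, Finset.prod_empty, pow_zero, one_mul]
    rw [← Real.rpow_mul (hf _), ← Real.rpow_mul (hg _),
      mul_one_div_cancel hq0.ne', Real.rpow_one, Real.rpow_one]
  | succ n ih =>
    intro f g hf hg
    set w : Bool → Bool → ℝ := fun s t => if s = t then (1+ρ)/4 else (1-ρ)/4 with hw
    set Wn : (Fin n → Bool) → (Fin n → Bool) → ℝ :=
      fun x y => ∏ i, (if x i = y i then (1+ρ)/4 else (1-ρ)/4) with hWn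
    set F : Bool → ℝ :=
      fun s => ((2:ℝ)⁻¹^n * ∑ x, f (Fin.cons s x) ^ (1+ρ))^(1/(1+ρ)) with hF
    set G : Bool → ℝ :=
      fun t => ((2:ℝ)⁻¹^n * ∑ y, g (Fin.cons t y) ^ (1+ρ))^(1/(1+ρ)) with hG
    have hWc : ∀ (s t : Bool) (x y : Fin n → Bool),
        (∏ i : Fin (n+1),
          (if (Fin.cons s x : Fin (n+1) → Bool) i = (Fin.cons t y : Fin (n+1) → Bool) i
            then (1+ρ)/4 else (1-ρ)/4))
        = w s t * Wn x y := by
      intro s t x y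
      rw [Fin.prod_univ_succ]
      simp [hw, hWn]
    have step1 : ∑ x : Fin (n+1) → Bool, ∑ y : Fin (n+1) → Bool,
        (∏ i, (if x i = y i then (1+ρ)/4 else (1-ρ)/4)) * f x * g y
        = ∑ s : Bool, ∑ t : Bool, w s t *
          (∑ x : Fin n → Bool, ∑ y : Fin n → Bool,
            Wn x y * f (Fin.cons s x) * g (Fin.cons t y)) := by
      rw [sum_succ_eq]
      refine Finset.sum_congr rfl fun s _ => ?_
      have e1 : ∀ x : Fin n → Bool,
          (∑ y : Fin (n+1) → Bool,
            (∏ i, (if (Fin.cons s x : Fin (n+1) → Bool) i = y i then (1+ρ)/4 else (1-ρ)/4))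
              * f (Fin.cons s x) * g y)
          = ∑ t : Bool, ∑ y : Fin n → Bool,
              w s t * (Wn x y * f (Fin.cons s x) * g (Fin.cons t y)) := by
        intro x
        rw [sum_succ_eq]
        refine Finset.sum_congr rfl fun t _ => Finset.sum_congr rfl fun y _ => ?_
        rw [hWc]; ring
      simp only [e1]
      rw [Finset.sum_comm]
      refine Finset.sum_congr rfl fun t _ => ?_
      rw [Finset.mul_sum]
      refine Finset.sum_congr rfl fun x _ => ?_
      rw [Finset.mul_sum]
    rw [step1]
    have hwnn : ∀ s t, 0 ≤ w s t := by
      intro s t; rw [hw]; dsimp only; split <;> linarith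
    have hIH : ∀ s t : Bool,
        (∑ x : Fin n → Bool, ∑ y : Fin n → Bool,
          Wn x y * f (Fin.cons s x) * g (Fin.cons t y)) ≤ F s * G t := fun s t =>
      ih (fun x => f (Fin.cons s x)) (fun y => g (Fin.cons t y))
        (fun x => hf _) (fun y => hg _)
    have step2 : ∑ s : Bool, ∑ t : Bool, w s t *
          (∑ x : Fin n → Bool, ∑ y : Fin n → Bool,
            Wn x y * f (Fin.cons s x) * g (Fin.cons t y))
        ≤ ∑ s : Bool, ∑ t : Bool, w s t * (F s * G t) :=
      Finset.sum_le_sum fun s _ => Finset.sum_le_sum fun t _ =>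
        mul_le_mul_of_nonneg_left (hIH s t) (hwnn s t)
    have hFnn : ∀ s, 0 ≤ F s := fun s => Real.rpow_nonneg
      (mul_nonneg (by positivity)
        (Finset.sum_nonneg fun x _ => Real.rpow_nonneg (hf _) _)) _
    have hGnn : ∀ t, 0 ≤ G t := fun t => Real.rpow_nonneg
      (mul_nonneg (by positivity)
        (Finset.sum_nonneg fun x _ => Real.rpow_nonneg (hg _) _)) _
    have hC := LC hρ hρ1 (hFnn false) (hFnn true) (hGnn false) (hGnn true)
    have step3 : ∑ s : Bool, ∑ t : Bool, w s t * (F s * G t)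
        = ((1+ρ)/4)*(F false * G false + F true * G true)
          + ((1-ρ)/4)*(F false * G true + F true * G false) := by
      rw [Fintype.sum_bool, Fintype.sum_bool, Fintype.sum_bool, hw]
      simp only []
      norm_num
      ring
    have hFq : ∀ s, F s ^ (1+ρ) = (2:ℝ)⁻¹^n * ∑ x, f (Fin.cons s x) ^ (1+ρ) := by
      intro s
      rw [hF]; dsimp only
      rw [one_div, Real.rpow_inv_rpow (mul_nonneg (by positivity)
        (Finset.sum_nonneg fun x _ => Real.rpow_nonneg (hf _) _)) hq0.ne']
    have hGq : ∀ t, G t ^ (1+ρ) = (2:ℝ)⁻¹^n * ∑ y, g (Fin.cons t y) ^ (1+ρ) := by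
      intro t
      rw [hG]; dsimp only
      rw [one_div, Real.rpow_inv_rpow (mul_nonneg (by positivity)
        (Finset.sum_nonneg fun x _ => Real.rpow_nonneg (hg _) _)) hq0.ne']
    have hMAeq : ((F false^(1+ρ) + F true^(1+ρ))/2)^(1/(1+ρ))
        = ((2:ℝ)⁻¹^(n+1) * ∑ z : Fin (n+1) → Bool, f z ^(1+ρ))^(1/(1+ρ)) := by
      congr 1
      rw [hFq, hFq, sum_succ_eq (fun z => f z ^ (1+ρ)), Fintype.sum_bool, pow_succ]
      ring
    have hMBeq : ((G false^(1+ρ) + G true^(1+ρ))/2)^(1/(1+ρ))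
        = ((2:ℝ)⁻¹^(n+1) * ∑ z : Fin (n+1) → Bool, g z ^(1+ρ))^(1/(1+ρ)) := by
      congr 1
      rw [hGq, hGq, sum_succ_eq (fun z => g z ^ (1+ρ)), Fintype.sum_bool, pow_succ]
      ring
    rw [← hMAeq, ← hMBeq]
    calc _ ≤ ∑ s : Bool, ∑ t : Bool, w s t * (F s * G t) := step2
      _ = _ := step3
      _ ≤ _ := hC

lemma weight_eq {ρ : ℝ} (hρ : 0 < ρ) (hρ1 : ρ < 1) {n : ℕ} (x y : Fin n → Bool) :
    (∏ i, (if x i = y i then (1+ρ)/4 else (1-ρ)/4))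
    = (2:ℝ)⁻¹ ^ n * ((1 + ρ)/2) ^ n * ((1 - ρ)/(1 + ρ)) ^ (hammingDist x y) := by
  classical
  rw [Finset.prod_ite (fun _ => ((1:ℝ)+ρ)/4) (fun _ => ((1:ℝ)-ρ)/4),
    Finset.prod_const, Finset.prod_const]
  have hcard_ne : (Finset.univ.filter fun i => ¬ x i = y i).card = hammingDist x y := by
    simp [hammingDist, Ne]
  have hsum : (Finset.univ.filter fun i => x i = y i).card
      + (Finset.univ.filter fun i => ¬ x i = y i).card = n := by
    rw [Finset.card_filter_add_card_filter_not]
    simp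
  have hd : hammingDist x y ≤ n := by omega
  have hcard_eq : (Finset.univ.filter fun i => x i = y i).card = n - hammingDist x y := by
    omega
  rw [hcard_ne, hcard_eq]
  have h1 : ((1:ℝ)+ρ)/4 ≠ 0 := by positivity
  rw [pow_sub₀ _ h1 hd]
  have h2 : ((1:ℝ)+ρ) ≠ 0 := by positivity
  have h4 : ((4:ℝ))^n = 2^n * 2^n := by rw [show (4:ℝ) = 2*2 by norm_num, mul_pow]
  simp only [div_pow, inv_pow]
  rw [h4]
  field_simp

end HyperAux

/-- the hypercontractive upper bound `P_ρ(A×B) ≤ η^{2/(1+ρ)}`. -/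
theorem stmt_11 (n : ℕ) (ρ η : ℝ) (hρ : ρ ∈ Set.Ioo (0:ℝ) 1) (hη : η ∈ Set.Ioc (0:ℝ) 1)
    (A B : Finset (Fin n → Bool))
    (hA : (A.card : ℝ) = η * 2 ^ n) (hB : (B.card : ℝ) = η * 2 ^ n) :
    Pxy n ρ A B ≤ η ^ (2/(1 + ρ)) := by
  obtain ⟨hρ0, hρ1⟩ := hρ
  obtain ⟨hη0, hη1⟩ := hη
  have hq0 : (0:ℝ) < 1 + ρ := by linarith
  classical
  have hfnn : ∀ x, 0 ≤ indA n A x := by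
    intro x; unfold indA; split <;> norm_num
  have hgnn : ∀ x, 0 ≤ indA n B x := by
    intro x; unfold indA; split <;> norm_num
  have key := main_ind hρ0 hρ1 n (indA n A) (indA n B) hfnn hgnn
  -- LHS identification
  have hL : Pxy n ρ A B = ∑ x : Fin n → Bool, ∑ y : Fin n → Bool,
      (∏ i, (if x i = y i then (1+ρ)/4 else (1-ρ)/4)) * indA n A x * indA n B y := by
    unfold Pxy indA
    simp only [mul_ite, mul_one, mul_zero, ite_mul, zero_mul, one_mul]
    have swap : ∀ (x y : Fin n → Bool),
        ((if y ∈ B then (if x ∈ A then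
            (∏ i, (if x i = y i then (1+ρ)/4 else (1-ρ)/4)) else 0) else 0) : ℝ)
        = if x ∈ A then (if y ∈ B then
            (∏ i, (if x i = y i then (1+ρ)/4 else (1-ρ)/4)) else 0) else 0 := by
      intro x y
      by_cases hx : x ∈ A <;> by_cases hy : y ∈ B <;> simp [hx, hy]
    simp only [swap]
    symm
    calc ∑ x : Fin n → Bool, ∑ y : Fin n → Bool,
          (if x ∈ A then (if y ∈ B then
            (∏ i, (if x i = y i then (1+ρ)/4 else (1-ρ)/4)) else 0) else 0)
        = ∑ x : Fin n → Bool, (if x ∈ A then (∑ y : Fin n → Bool, (if y ∈ B then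
            (∏ i, (if x i = y i then (1+ρ)/4 else (1-ρ)/4)) else 0)) else 0) := by
          refine Finset.sum_congr rfl fun x _ => ?_
          by_cases hx : x ∈ A <;> simp [hx]
      _ = ∑ x ∈ A, ∑ y : Fin n → Bool, (if y ∈ B then
            (∏ i, (if x i = y i then (1+ρ)/4 else (1-ρ)/4)) else 0) := by
          rw [Finset.sum_ite_mem, Finset.univ_inter]
      _ = ∑ x ∈ A, ∑ y ∈ B, (∏ i, (if x i = y i then (1+ρ)/4 else (1-ρ)/4)) := by
          refine Finset.sum_congr rfl fun x _ => ?_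
          rw [Finset.sum_ite_mem, Finset.univ_inter]
      _ = ∑ a ∈ A, ∑ b ∈ B,
            (2:ℝ)⁻¹ ^ n * ((1 + ρ)/2) ^ n * ((1 - ρ)/(1 + ρ)) ^ (hammingDist a b) :=
          Finset.sum_congr rfl fun a _ => Finset.sum_congr rfl fun b _ =>
            weight_eq hρ0 hρ1 a b
  -- indicator power sums
  have hfq : ((2:ℝ)⁻¹^n * ∑ x : Fin n → Bool, (indA n A x) ^ (1+ρ)) = η := by
    unfold indA
    simp only [apply_ite (fun z : ℝ => z ^ (1+ρ)), Real.one_rpow,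
      Real.zero_rpow hq0.ne']
    rw [Finset.sum_ite_mem, Finset.univ_inter, Finset.sum_const, nsmul_eq_mul, mul_one,
      hA, inv_pow]
    field_simp
  have hgq : ((2:ℝ)⁻¹^n * ∑ x : Fin n → Bool, (indA n B x) ^ (1+ρ)) = η := by
    unfold indA
    simp only [apply_ite (fun z : ℝ => z ^ (1+ρ)), Real.one_rpow,
      Real.zero_rpow hq0.ne']
    rw [Finset.sum_ite_mem, Finset.univ_inter, Finset.sum_const, nsmul_eq_mul, mul_one,
      hB, inv_pow]
    field_simp
  rw [hfq, hgq] at key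
  rw [hL]
  refine key.trans (le_of_eq ?_)
  rw [← Real.rpow_add hη0]
  congr 1
  ring
end

section
/- The function φ(x,y) = h⁻¹(x) * h⁻¹(y) is jointly convex on [0,1]², i.e. (x,y) ↦ h⁻¹(x)(1−h⁻¹(y)) + h⁻¹(y)(1−h⁻¹(x)) is a convex function of (x,y) ∈ [0,1]². -/
open Finset Asymptotics Filter

namespace BEAux
open Real Set

lemma binEnt_eq (p : ℝ) : binEnt p = Real.binEntropy p / Real.log 2 := by
  simp only [binEnt, Real.binEntropy, Real.logb, Real.log_inv]
  ring

lemma binEnt_zero : binEnt 0 = 0 := by simp [binEnt_eq]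

lemma binEnt_half : binEnt (1/2) = 1 := by
  rw [binEnt_eq, show (1/2 : ℝ) = 2⁻¹ by norm_num, Real.binEntropy_two_inv]
  exact div_self (Real.log_pos (by norm_num)).ne'

lemma log2_pos : (0:ℝ) < Real.log 2 := Real.log_pos (by norm_num)

lemma binEnt_strictMonoOn : StrictMonoOn binEnt (Icc (0:ℝ) (1/2)) := by
  intro a ha b hb hab
  rw [binEnt_eq, binEnt_eq, div_lt_div_iff_of_pos_right log2_pos]
  exact Real.binEntropy_strictMonoOn (by simpa [one_div] using ha) (by simpa [one_div] using hb) hab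

lemma binEnt_continuous : Continuous binEnt := by
  have : binEnt = fun p => Real.binEntropy p / Real.log 2 := funext binEnt_eq
  rw [this]
  exact Real.binEntropy_continuous.div_const _

lemma binEnt_le_one (p : ℝ) : binEnt p ≤ 1 := by
  rw [binEnt_eq, div_le_one log2_pos]
  exact Real.binEntropy_le_log_two

lemma binEnt_pos {p : ℝ} (h0 : 0 < p) (h1 : p < 1) : 0 < binEnt p := by
  rw [binEnt_eq]
  exact div_pos (Real.binEntropy_pos h0 h1) log2_pos

lemma binEntInv_of_eq {p x : ℝ} (hp0 : 0 ≤ p) (hp2 : p ≤ 1/2) (hpx : binEnt p = x) :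
    binEntInv x = p := by
  have hset : {q : ℝ | q ∈ Icc (0:ℝ) (1/2) ∧ binEnt q ≤ x} = Icc 0 p := by
    ext q
    simp only [mem_setOf_eq, Set.mem_Icc]
    constructor
    · rintro ⟨hq, hqx⟩
      exact ⟨hq.1, (binEnt_strictMonoOn.le_iff_le hq ⟨hp0, hp2⟩).1 (hpx ▸ hqx)⟩
    · rintro ⟨h0, hqp⟩
      refine ⟨⟨h0, hqp.trans hp2⟩, ?_⟩
      rw [← hpx]
      exact binEnt_strictMonoOn.monotoneOn ⟨h0, hqp.trans hp2⟩ ⟨hp0, hp2⟩ hqp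
  rw [binEntInv, hset, csSup_Icc hp0]

lemma exists_binEnt_eq {x : ℝ} (hx0 : 0 ≤ x) (hx1 : x ≤ 1) :
    ∃ p, 0 ≤ p ∧ p ≤ 1/2 ∧ binEnt p = x := by
  have hm : x ∈ Icc (binEnt 0) (binEnt (1/2)) := by
    rw [binEnt_zero, binEnt_half]; exact ⟨hx0, hx1⟩
  obtain ⟨p, hp, hpx⟩ := intermediate_value_Icc (by norm_num) binEnt_continuous.continuousOn hm
  exact ⟨p, hp.1, hp.2, hpx⟩

lemma binEntInv_mem {x : ℝ} (hx0 : 0 ≤ x) (hx1 : x ≤ 1) :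
    0 ≤ binEntInv x ∧ binEntInv x ≤ 1/2 ∧ binEnt (binEntInv x) = x := by
  obtain ⟨p, h0, h2, hpx⟩ := exists_binEnt_eq hx0 hx1
  rw [binEntInv_of_eq h0 h2 hpx]
  exact ⟨h0, h2, hpx⟩

lemma binEntInv_monotone : Monotone binEntInv := by
  intro x y hxy
  rcases ({p : ℝ | p ∈ Icc (0:ℝ) (1/2) ∧ binEnt p ≤ x}).eq_empty_or_nonempty with he | hne
  · rw [binEntInv, he, Real.sSup_empty]
    exact Real.sSup_nonneg (fun q hq => hq.1.1)
  · exact csSup_le_csSup ⟨1/2, fun q hq => hq.1.2⟩ hne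
      (fun q hq => ⟨hq.1, hq.2.trans hxy⟩)

open Real Set
lemma binEntInv_binEnt {p : ℝ} (h0 : 0 ≤ p) (h2 : p ≤ 1/2) : binEntInv (binEnt p) = p :=
  binEntInv_of_eq h0 h2 rfl

lemma binEntInv_zero : binEntInv 0 = 0 := binEntInv_of_eq le_rfl (by norm_num) binEnt_zero
lemma binEntInv_one : binEntInv 1 = 1/2 := binEntInv_of_eq (by norm_num) le_rfl binEnt_half

lemma binEntInv_mem_Ioo {x : ℝ} (hx0 : 0 < x) (hx1 : x < 1) :
    0 < binEntInv x ∧ binEntInv x < 1/2 := by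
  obtain ⟨h0, h2, hE⟩ := binEntInv_mem hx0.le hx1.le
  constructor
  · rcases h0.lt_or_eq with h | h
    · exact h
    · exfalso; rw [← h, binEnt_zero] at hE; exact hx0.ne' hE.symm
  · rcases h2.lt_or_eq with h | h
    · exact h
    · exfalso; rw [h, binEnt_half] at hE; exact hx1.ne hE.symm

lemma continuousAt_binEntInv {x : ℝ} (hx0 : 0 < x) (hx1 : x < 1) :
    ContinuousAt binEntInv x := by
  obtain ⟨h0, h2⟩ := binEntInv_mem_Ioo hx0 hx1
  refine continuousAt_of_monotoneOn_of_image_mem_nhds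
    (binEntInv_monotone.monotoneOn univ) univ_mem ?_
  refine mem_of_superset (isOpen_Ioo.mem_nhds ⟨h0, h2⟩) ?_
  intro q hq
  exact ⟨binEnt q, trivial, binEntInv_binEnt hq.1.le hq.2.le⟩

lemma continuousOn_binEntInv : ContinuousOn binEntInv (Icc (0:ℝ) 1) := by
  intro a ha
  rcases lt_or_eq_of_le ha.1 with h0 | h0
  · rcases lt_or_eq_of_le ha.2 with h1 | h1
    · exact (continuousAt_binEntInv h0 h1).continuousWithinAt
    · -- a = 1, left continuity
      subst h1
      refine ContinuousWithinAt.mono ?_ (Icc_subset_Iic_self)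
      refine continuousWithinAt_left_of_monotoneOn_of_exists_between
        (binEntInv_monotone.monotoneOn univ) univ_mem ?_
      intro b hb
      rw [binEntInv_one] at hb ⊢
      set q := (max b (1/4) + 1/2)/2 with hq
      have hq1 : q < 1/2 := by
        have : max b (1/4) < 1/2 := by
          rcases le_or_gt b (1/4) with h | h
          · rw [max_eq_right h]; norm_num
          · rw [max_eq_left h.le]; exact hb
        simp only [hq]; linarith
      have hq0 : 0 < q := by
        have : (1/4:ℝ) ≤ max b (1/4) := le_max_right _ _
        simp only [hq]; linarith
      have hqb : b < q := by
        have : b ≤ max b (1/4) := le_max_left _ _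
        simp only [hq]
        have h4 : max b (1/4) < 1/2 := by
          rcases le_or_gt b (1/4) with h | h
          · rw [max_eq_right h]; norm_num
          · rw [max_eq_left h.le]; exact hb
        linarith
      exact ⟨binEnt q, trivial, by rw [binEntInv_binEnt hq0.le hq1.le]; exact ⟨hqb, hq1⟩⟩
  · -- a = 0, right continuity
    subst h0
    refine ContinuousWithinAt.mono ?_ (Icc_subset_Ici_self)
    refine continuousWithinAt_right_of_monotoneOn_of_exists_between
      (binEntInv_monotone.monotoneOn univ) univ_mem ?_
    intro b hb
    rw [binEntInv_zero] at hb ⊢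
    set q := min (b/2) (1/4) with hq
    have hq0 : 0 < q := lt_min (by linarith) (by norm_num)
    have hq2 : q ≤ 1/2 := (min_le_right _ _).trans (by norm_num)
    have hqb : q < b := (min_le_left _ _).trans_lt (by linarith)
    exact ⟨binEnt q, trivial, by rw [binEntInv_binEnt hq0.le hq2]; exact ⟨hq0, hqb⟩⟩

lemma hasDerivAt_binEnt {p : ℝ} (h0 : p ≠ 0) (h1 : p ≠ 1) :
    HasDerivAt binEnt ((Real.log (1 - p) - Real.log p) / Real.log 2) p := by
  have h := (Real.hasDerivAt_binEntropy h0 h1).div_const (Real.log 2)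
  have : binEnt = fun q => Real.binEntropy q / Real.log 2 := funext binEnt_eq
  rw [this]
  exact h

lemma hasDerivAt_binEntInv {x : ℝ} (hx0 : 0 < x) (hx1 : x < 1) :
    HasDerivAt binEntInv
      (((Real.log (1 - binEntInv x) - Real.log (binEntInv x)) / Real.log 2)⁻¹) x := by
  obtain ⟨h0, h2⟩ := binEntInv_mem_Ioo hx0 hx1
  have hL : 0 < (Real.log (1 - binEntInv x) - Real.log (binEntInv x)) / Real.log 2 := by
    apply div_pos _ log2_pos
    have : Real.log (binEntInv x) < Real.log (1 - binEntInv x) :=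
      Real.log_lt_log h0 (by linarith)
    linarith
  refine HasDerivAt.of_local_left_inverse (continuousAt_binEntInv hx0 hx1)
    (hasDerivAt_binEnt h0.ne' (by linarith)) hL.ne' ?_
  filter_upwards [isOpen_Ioo.mem_nhds (show x ∈ Ioo (0:ℝ) 1 from ⟨hx0, hx1⟩)] with y hy
  exact (binEntInv_mem hy.1.le hy.2.le).2.2

open Real Set
/-- The elementary inequality `2 log t ≤ t - 1/t` for `t ≥ 1`. -/
lemma two_log_le {t : ℝ} (ht : 1 ≤ t) : 2 * Real.log t ≤ t - 1/t := by
  set F : ℝ → ℝ := fun s => s - 1/s - 2 * Real.log s with hF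
  have key : MonotoneOn F (Ici (1:ℝ)) := by
    have hd : ∀ s ∈ Ici (1:ℝ), HasDerivAt F (1 + (s^2)⁻¹ - 2 * s⁻¹) s := by
      intro s hs
      have hs1 : (1:ℝ) ≤ s := hs
      have hs0 : s ≠ 0 := by positivity
      have h1 : HasDerivAt (fun s : ℝ => s - 1/s) (1 - (-(s^2)⁻¹)) s := by
        simpa [one_div] using (hasDerivAt_id s).fun_sub (hasDerivAt_inv hs0)
      have h2 : HasDerivAt (fun s : ℝ => 2 * Real.log s) (2 * s⁻¹) s :=
        (Real.hasDerivAt_log hs0).const_mul 2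
      have := h1.fun_sub h2
      exact this.congr_deriv (by ring)
    refine monotoneOn_of_deriv_nonneg (convex_Ici 1) ?_ ?_ ?_
    · exact fun s hs => (hd s hs).continuousAt.continuousWithinAt
    · intro s hs
      rw [interior_Ici] at hs
      exact ((hd s (mem_Ici.2 (le_of_lt hs))).differentiableAt).differentiableWithinAt
    · intro s hs
      rw [interior_Ici] at hs
      rw [(hd s (mem_Ici.2 hs.le)).deriv]
      have h1 : (1:ℝ) < s := hs
      have hs0 : (0:ℝ) < s := by linarith
      have h2 : (0:ℝ) < s^2 := by positivity
      have heq : 1 + (s^2)⁻¹ - 2*s⁻¹ = (s-1)^2 / s^2 := by field_simp; ring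
      rw [heq]; positivity
  have := key (mem_Ici.2 le_rfl) (mem_Ici.2 ht) ht
  simp only [hF] at this
  rw [Real.log_one] at this
  norm_num at this
  rw [one_div]
  linarith


open Real Set BEAux

lemma key_ineq {p : ℝ} (h0 : 0 < p) (h2 : p < 1/2) :
    2 * (Real.log (1 - p) - Real.log p) ≤ (1 - 2*p) / (p * (1 - p)) := by
  have h1 : (0:ℝ) < 1 - p := by linarith
  have ht : 1 ≤ (1 - p) / p := (one_le_div h0).2 (by linarith)
  have := two_log_le ht
  rw [Real.log_div h1.ne' h0.ne'] at this
  have heq : (1 - p)/p - 1/((1 - p)/p) = (1 - 2*p) / (p * (1 - p)) := by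
    rw [one_div_div]
    field_simp
    ring
  linarith [heq ▸ this]

/-- `g p = (1-2p)/h'(p)`, the negative of (1/4 of) the derivative of `(1-2h⁻¹)²`. -/
noncomputable def g (p : ℝ) : ℝ :=
  (1 - 2*p) * Real.log 2 / (Real.log (1 - p) - Real.log p)

lemma M_pos {p : ℝ} (h0 : 0 < p) (h2 : p < 1/2) :
    0 < Real.log (1 - p) - Real.log p := by
  have : Real.log p < Real.log (1 - p) := Real.log_lt_log h0 (by linarith)
  linarith

lemma hasDerivAt_g {p : ℝ} (h0 : 0 < p) (h2 : p < 1/2) :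
    HasDerivAt g
      (((-2 * Real.log 2) * (Real.log (1 - p) - Real.log p)
        - (1 - 2*p) * Real.log 2 * (-(1 - p)⁻¹ - p⁻¹))
        / (Real.log (1 - p) - Real.log p)^2) p := by
  have h1 : (0:ℝ) < 1 - p := by linarith
  have hu : HasDerivAt (fun q : ℝ => (1 - 2*q) * Real.log 2) (-2 * Real.log 2) p := by
    simpa using ((hasDerivAt_const p (1:ℝ)).sub ((hasDerivAt_id p).const_mul 2)).mul_const (Real.log 2)
  have hl1 : HasDerivAt (fun q : ℝ => Real.log (1 - q)) (-(1 - p)⁻¹) p := by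
    have hc : HasDerivAt (fun q : ℝ => 1 - q) (-1) p := by
      simpa using (hasDerivAt_const p (1:ℝ)).fun_sub (hasDerivAt_id p)
    have := (Real.hasDerivAt_log h1.ne').comp p hc
    exact this.congr_deriv (by ring)
  have hM : HasDerivAt (fun q : ℝ => Real.log (1 - q) - Real.log q) (-(1 - p)⁻¹ - p⁻¹) p :=
    hl1.sub (Real.hasDerivAt_log h0.ne')
  exact hu.div hM (M_pos h0 h2).ne'

lemma g_monotoneOn : MonotoneOn g (Ioo (0:ℝ) (1/2)) := by
  refine monotoneOn_of_deriv_nonneg (convex_Ioo 0 (1/2)) ?_ ?_ ?_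
  · exact fun p hp => (hasDerivAt_g hp.1 hp.2).continuousAt.continuousWithinAt
  · rw [interior_Ioo]
    exact fun p hp => (hasDerivAt_g hp.1 hp.2).differentiableAt.differentiableWithinAt
  · rw [interior_Ioo]
    intro p hp
    obtain ⟨h0, h2⟩ := hp
    have h1 : (0:ℝ) < 1 - p := by linarith
    rw [(hasDerivAt_g h0 h2).deriv]
    apply div_nonneg _ (sq_nonneg _)
    have hkey := key_ineq h0 h2
    have heq : -(1 - p)⁻¹ - p⁻¹ = -(1 / (p * (1 - p))) := by field_simp; ring
    rw [heq]
    have expand : (-2 * Real.log 2) * (Real.log (1 - p) - Real.log p)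
        - (1 - 2*p) * Real.log 2 * (-(1 / (p * (1 - p))))
        = Real.log 2 * ((1 - 2*p) / (p * (1 - p)) - 2 * (Real.log (1 - p) - Real.log p)) := by
      ring
    rw [expand]
    exact mul_nonneg log2_pos.le (by linarith)

/-- `w x = (1 - 2 h⁻¹(x))²`. -/
noncomputable def w (x : ℝ) : ℝ := (1 - 2 * binEntInv x)^2

lemma hasDerivAt_w {x : ℝ} (hx0 : 0 < x) (hx1 : x < 1) :
    HasDerivAt w (-4 * g (binEntInv x)) x := by
  obtain ⟨h0, h2⟩ := binEntInv_mem_Ioo hx0 hx1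
  set p := binEntInv x
  have hM := M_pos h0 h2
  have hinner : HasDerivAt (fun y => 1 - 2 * binEntInv y)
      (-(2 * ((Real.log (1 - p) - Real.log p) / Real.log 2)⁻¹)) x := by
    simpa using (hasDerivAt_const x (1:ℝ)).fun_sub ((hasDerivAt_binEntInv hx0 hx1).const_mul 2)
  have := hinner.fun_pow 2
  refine this.congr_deriv ?_
  symm
  rw [inv_div]
  simp only [g]
  push_cast
  rw [pow_one]
  show -4 * ((1 - 2 * p) * Real.log 2 / (Real.log (1 - p) - Real.log p)) =
    2 * (1 - 2 * p) * -(2 * (Real.log 2 / (Real.log (1 - p) - Real.log p)))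
  ring

lemma concaveOn_w : ConcaveOn ℝ (Icc (0:ℝ) 1) w := by
  refine AntitoneOn.concaveOn_of_deriv (convex_Icc 0 1) ?_ ?_ ?_
  · exact (continuousOn_const.sub (continuousOn_const.mul continuousOn_binEntInv)).pow 2
  · rw [interior_Icc]
    exact fun x hx => (hasDerivAt_w hx.1 hx.2).differentiableAt.differentiableWithinAt
  · rw [interior_Icc]
    intro x hx y hy hxy
    rw [(hasDerivAt_w hx.1 hx.2).deriv, (hasDerivAt_w hy.1 hy.2).deriv]
    have hgx := binEntInv_mem_Ioo hx.1 hx.2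
    have hgy := binEntInv_mem_Ioo hy.1 hy.2
    have := g_monotoneOn ⟨hgx.1, hgx.2⟩ ⟨hgy.1, hgy.2⟩ (binEntInv_monotone hxy)
    linarith

open Real Set
noncomputable def u (x : ℝ) : ℝ := 1 - 2 * binEntInv x

lemma u_nonneg {x : ℝ} (hx : x ∈ Icc (0:ℝ) 1) : 0 ≤ u x := by
  have := (binEntInv_mem hx.1 hx.2).2.1
  simp only [u]; linarith

lemma concaveOn_prod :
    ConcaveOn ℝ (Icc (0:ℝ) 1 ×ˢ Icc (0:ℝ) 1) (fun p : ℝ × ℝ => u p.1 * u p.2) := by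
  refine ⟨(convex_Icc 0 1).prod (convex_Icc 0 1), ?_⟩
  rintro ⟨x1, y1⟩ hp ⟨x2, y2⟩ hq a b ha hb hab
  obtain ⟨hx1, hy1⟩ := Set.mem_prod.1 hp
  obtain ⟨hx2, hy2⟩ := Set.mem_prod.1 hq
  simp only [Prod.smul_mk, Prod.mk_add_mk, smul_eq_mul]
  have hcx : a * x1 + b * x2 ∈ Icc (0:ℝ) 1 := by
    have := (convex_Icc (0:ℝ) 1) hx1 hx2 ha hb hab
    simpa using this
  have hcy : a * y1 + b * y2 ∈ Icc (0:ℝ) 1 := by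
    have := (convex_Icc (0:ℝ) 1) hy1 hy2 ha hb hab
    simpa using this
  -- concavity of w in each coordinate
  have hwx := concaveOn_w.2 hx1 hx2 ha hb hab
  have hwy := concaveOn_w.2 hy1 hy2 ha hb hab
  simp only [smul_eq_mul, w] at hwx hwy
  set U := u (a * x1 + b * x2) with hU
  set V := u (a * y1 + b * y2) with hV
  have hUnn : 0 ≤ U := u_nonneg hcx
  have hVnn : 0 ≤ V := u_nonneg hcy
  have hu1 : 0 ≤ u x1 := u_nonneg hx1
  have hu2 : 0 ≤ u x2 := u_nonneg hx2
  have hv1 : 0 ≤ u y1 := u_nonneg hy1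
  have hv2 : 0 ≤ u y2 := u_nonneg hy2
  have hU2 : a * (u x1)^2 + b * (u x2)^2 ≤ U^2 := by simpa [u, hU] using hwx
  have hV2 : a * (u y1)^2 + b * (u y2)^2 ≤ V^2 := by simpa [u, hV] using hwy
  have hXnn : 0 ≤ a * (u x1)^2 + b * (u x2)^2 := by positivity
  have hYnn : 0 ≤ a * (u y1)^2 + b * (u y2)^2 := by positivity
  -- Cauchy–Schwarz
  have hCS : (a * (u x1 * u y1) + b * (u x2 * u y2))^2
      ≤ (a * (u x1)^2 + b * (u x2)^2) * (a * (u y1)^2 + b * (u y2)^2) := by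
    nlinarith [mul_nonneg ha hb, sq_nonneg (u x1 * u y2 - u x2 * u y1)]
  have hprod : (a * (u x1)^2 + b * (u x2)^2) * (a * (u y1)^2 + b * (u y2)^2)
      ≤ U^2 * V^2 := by
    nlinarith [mul_nonneg (sub_nonneg.2 hU2) (sq_nonneg V), mul_nonneg hXnn (sub_nonneg.2 hV2)]
  have hsq : (a * (u x1 * u y1) + b * (u x2 * u y2))^2 ≤ (U * V)^2 := by
    calc _ ≤ _ := hCS
    _ ≤ U^2 * V^2 := hprod
    _ = (U * V)^2 := by ring
  have hlhsnn : 0 ≤ a * (u x1 * u y1) + b * (u x2 * u y2) := by positivity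
  have hUVnn : 0 ≤ U * V := mul_nonneg hUnn hVnn
  calc a * (u x1 * u y1) + b * (u x2 * u y2)
      = Real.sqrt ((a * (u x1 * u y1) + b * (u x2 * u y2))^2) := (Real.sqrt_sq hlhsnn).symm
    _ ≤ Real.sqrt ((U * V)^2) := Real.sqrt_le_sqrt hsq
    _ = U * V := Real.sqrt_sq hUVnn


end BEAux

/-- `(x,y) ↦ h⁻¹(x) * h⁻¹(y)` is jointly convex on `[0,1]²`. -/
theorem stmt_13 :
    ConvexOn ℝ (Set.Icc (0:ℝ) 1 ×ˢ Set.Icc (0:ℝ) 1)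
      (fun p : ℝ × ℝ =>
        binEntInv p.1 * (1 - binEntInv p.2) + binEntInv p.2 * (1 - binEntInv p.1)) := by
  have hu := BEAux.concaveOn_prod
  refine ⟨(convex_Icc 0 1).prod (convex_Icc 0 1), ?_⟩
  rintro ⟨x1, y1⟩ hp ⟨x2, y2⟩ hq a b ha hb hab
  have h2 := hu.2 hp hq ha hb hab
  simp only [Prod.smul_mk, Prod.mk_add_mk, smul_eq_mul, BEAux.u] at h2 ⊢
  nlinarith [h2]
end

section
/- The function v(t) = (1−2t) / ln((1−t)/t) is strictly increasing on the open interval (0, 1/2). -/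
open Finset Asymptotics Filter

lemma gDeriv (x : ℝ) (hx : x ≠ 0) :
    HasDerivAt (fun x : ℝ => x - 1/x - 2*Real.log x) (1 + 1/x^2 - 2/x) x := by
  have h1 : HasDerivAt (fun x : ℝ => x) 1 x := hasDerivAt_id x
  have h2 : HasDerivAt (fun x : ℝ => 1/x) (-(x^2)⁻¹) x := by
    simpa [one_div] using hasDerivAt_inv hx
  have h3 : HasDerivAt (fun x : ℝ => 2 * Real.log x) (2 * x⁻¹) x :=
    (Real.hasDerivAt_log hx).const_mul 2
  have := (h1.sub h2).sub h3
  exact this.congr_deriv (by ring)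

lemma aux1 {x : ℝ} (hx : 1 < x) : 2 * Real.log x < x - 1/x := by
  set g : ℝ → ℝ := fun x => x - 1/x - 2*Real.log x with hg
  have hmono : StrictMonoOn g (Set.Ici 1) := by
    apply strictMonoOn_of_deriv_pos (convex_Ici 1)
    · intro y hy
      have hy0 : y ≠ 0 := by
        simp only [Set.mem_Ici] at hy; intro h; rw [h] at hy; linarith
      exact ((gDeriv y hy0).continuousAt).continuousWithinAt
    · intro y hy
      rw [interior_Ici] at hy
      have hy1 : (1:ℝ) < y := hy
      have hy0 : y ≠ 0 := by linarith
      rw [hg, (gDeriv y hy0).deriv]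
      have : 1 + 1/y^2 - 2/y = (1 - 1/y)^2 := by field_simp; ring
      rw [this]
      have h : 1/y < 1 := by rw [div_lt_one (by linarith)]; exact hy1
      have h' : 1 - 1/y ≠ 0 := by linarith
      positivity
  have h0 : g 1 = 0 := by simp [hg]
  have := hmono (Set.self_mem_Ici) (Set.mem_Ici.2 hx.le) hx
  rw [h0] at this
  simp only [hg] at this
  linarith

lemma vDeriv {t : ℝ} (ht : t ∈ Set.Ioo (0:ℝ) (1/2)) :
    HasDerivAt (fun t : ℝ => (1 - 2*t) / Real.log ((1 - t)/t))
      (((-2) * Real.log ((1 - t)/t) - (1 - 2*t) * (-(1/(t*(1-t))))) /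
        (Real.log ((1 - t)/t))^2) t := by
  obtain ⟨ht0, ht2⟩ := ht
  have ht1 : t < 1 := by linarith
  have htne : t ≠ 0 := ne_of_gt ht0
  have h1t : (0:ℝ) < 1 - t := by linarith
  have hx1 : 1 < (1 - t)/t := by
    rw [lt_div_iff₀ ht0]; linarith
  have hxpos : (0:ℝ) < (1 - t)/t := by linarith
  have hu : HasDerivAt (fun t : ℝ => (1 - t)/t) (-(1/t^2)) t := by
    have h1 : HasDerivAt (fun t : ℝ => 1 - t) (-1) t := by
      simpa using (hasDerivAt_id t).const_sub 1
    have := h1.div (hasDerivAt_id t) htne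
    exact this.congr_deriv (by simp only [id]; ring)
  have hL : HasDerivAt (fun t : ℝ => Real.log ((1 - t)/t)) (-(1/(t*(1-t)))) t := by
    have := hu.log (ne_of_gt hxpos)
    convert this using 1
    field_simp
  have hN : HasDerivAt (fun t : ℝ => 1 - 2*t) (-2) t := by
    simpa using ((hasDerivAt_id t).const_mul 2).const_sub 1
  have hLne : Real.log ((1 - t)/t) ≠ 0 :=
    ne_of_gt (Real.log_pos hx1)
  exact hN.div hL hLne


/-- `v(t) = (1−2t)/ln((1−t)/t)` is strictly increasing on `(0,1/2)`. -/
theorem stmt_14 :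
    StrictMonoOn (fun t : ℝ => (1 - 2*t) / Real.log ((1 - t)/t)) (Set.Ioo (0:ℝ) (1/2)) := by
  apply strictMonoOn_of_deriv_pos (convex_Ioo 0 (1/2))
  · intro t ht
    exact ((vDeriv ht).continuousAt).continuousWithinAt
  · intro t ht
    rw [interior_Ioo] at ht
    rw [(vDeriv ht).deriv]
    obtain ⟨ht0, ht2⟩ := ht
    have h1t : (0:ℝ) < 1 - t := by linarith
    have hx1 : 1 < (1 - t)/t := by rw [lt_div_iff₀ ht0]; linarith
    have hL : 0 < Real.log ((1 - t)/t) := Real.log_pos hx1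
    apply div_pos
    · have key := aux1 hx1
      have heq : (1 - t)/t - 1/((1 - t)/t) = (1 - 2*t) * (1/(t*(1-t))) := by
        field_simp
        ring
      rw [heq] at key
      linarith
    · positivity
end
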